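/- arXiv:1604.02215 — 7 statements merged into one kernel-verified Lean document; each statement's English description precedes it below -/
import Mathlib

section
/- Let F be a free Borel flow on a standard Borel space X and let λ > 0. The flow F admits a {λ}-regular cross section (i.e. a cross section all of whose gaps equal λ) if and only if there exists a Borel function f : X → ℂ \ {0} such that f(x + r) = e^{2πir/λ} · f(x) for all x ∈ X and all r ∈ ℝ. -/
/-- A Borel flow: a Borel measurable action of `(ℝ, +)` on `X`. -/
structure BorelFlow (X : Type*) [MeasurableSpace X] where
  act : X → ℝ → X
  measurable : Measurable (Function.uncurry act)
  act_zero : ∀ x, act x 0 = x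
  act_add : ∀ x r s, act (act x r) s = act x (r + s)

namespace BorelFlow

variable {X : Type*} [MeasurableSpace X] (F : BorelFlow X)

/-- The flow is free if `x + r = x` implies `r = 0`. -/
def Free : Prop := ∀ x r, F.act x r = x → r = 0

/-- A cross section for the flow restricted to an invariant set `A`: a Borel subset
of `A` meeting every orbit in `A`, lacunary, and bi-infinite on every orbit. -/
def IsCrossSectionOn (A C : Set X) : Prop :=
  MeasurableSet C ∧ C ⊆ A ∧
  (∀ x ∈ A, ∃ r : ℝ, F.act x r ∈ C) ∧
  (∃ c > 0, ∀ x ∈ C, ∀ r > 0, F.act x r ∈ C → c ≤ r) ∧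
  (∀ x ∈ C, ¬ BddAbove {r : ℝ | F.act x r ∈ C} ∧ ¬ BddBelow {r : ℝ | F.act x r ∈ C})

/-- A cross section for the flow on the whole space. -/
def IsCrossSection (C : Set X) : Prop := F.IsCrossSectionOn Set.univ C

/-- The gap of `x ∈ C`: the least `r > 0` with `x + r ∈ C`. -/
noncomputable def gap (C : Set X) (x : X) : ℝ :=
  sInf {r : ℝ | 0 < r ∧ F.act x r ∈ C}

/-- The induced automorphism `φ_C` sending a point of `C` to the next one. -/
noncomputable def nextPoint (C : Set X) (x : X) : X := F.act x (F.gap C x)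

/-- The gap to the previous point of the cross section. -/
noncomputable def prevGap (C : Set X) (x : X) : ℝ :=
  sInf {r : ℝ | 0 < r ∧ F.act x (-r) ∈ C}

/-- The inverse of the induced automorphism: the previous point of the cross section. -/
noncomputable def prevPoint (C : Set X) (x : X) : X := F.act x (-(F.prevGap C x))

/-- `C` is an `S`-regular cross section on `A`: all gaps belong to `S`. -/
def SRegularOn (A C : Set X) (S : Set ℝ) : Prop :=
  F.IsCrossSectionOn A C ∧ ∀ x ∈ C, F.gap C x ∈ S

/-- `C` is an `S`-regular cross section: all gaps belong to `S`. -/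
def SRegular (C : Set X) (S : Set ℝ) : Prop := F.SRegularOn Set.univ C S

/-- A cross section on `A` with gaps unbounded in both directions along every orbit. -/
def SparseSectionOn (A C : Set X) : Prop :=
  F.IsCrossSectionOn A C ∧ ∀ x ∈ C, ∀ K > 0,
    (∃ n : ℕ, 0 < n ∧ K < F.gap C ((F.nextPoint C)^[n] x)) ∧
    (∃ m : ℕ, 0 < m ∧ K < F.gap C ((F.prevPoint C)^[m] x))

/-- The flow restricted to `A` is sparse. -/
def SparseOn (A : Set X) : Prop := ∃ C, F.SparseSectionOn A C

/-- The flow is sparse. -/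
def Sparse : Prop := F.SparseOn Set.univ

/-- A flow-invariant set. -/
def Invariant (A : Set X) : Prop := ∀ x ∈ A, ∀ r : ℝ, F.act x r ∈ A

end BorelFlow

open Set

namespace AmbroseAux

variable {X : Type*} [MeasurableSpace X] (F : BorelFlow X) {C : Set X} {lam : ℝ}

lemma leastPos (hlam : 0 < lam) (hC : F.SRegular C {lam}) {x : X} (hx : x ∈ C) :
    IsLeast {r : ℝ | 0 < r ∧ F.act x r ∈ C} lam := by
  obtain ⟨c, hc, hlac⟩ := hC.1.2.2.2.1
  have hbi := hC.1.2.2.2.2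
  have hg : F.gap C x = lam := Set.mem_singleton_iff.mp (hC.2 x hx)
  set S : Set ℝ := {r | 0 < r ∧ F.act x r ∈ C} with hS
  have hbdd : ∀ r ∈ S, c ≤ r := fun r hr => hlac x hx r hr.1 hr.2
  have hne : S.Nonempty := by
    obtain ⟨r, hrC, hrgt⟩ := not_bddAbove_iff.mp (hbi x hx).1 0
    exact ⟨r, hrgt, hrC⟩
  have hbb : BddBelow S := ⟨c, hbdd⟩
  have hinf : sInf S = lam := hg
  have hmem : lam ∈ S := by
    have h1 : sInf S < lam + c := by rw [hinf]; linarith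
    obtain ⟨r, hrS, hrlt⟩ := exists_lt_of_csInf_lt hne h1
    have hlr : lam ≤ r := hinf ▸ csInf_le hbb hrS
    rcases eq_or_lt_of_le hlr with h | h
    · rwa [h]
    · exfalso
      obtain ⟨r', hr'S, hr'lt⟩ := exists_lt_of_csInf_lt hne (show sInf S < r by rw [hinf]; exact h)
      have hlr' : lam ≤ r' := hinf ▸ csInf_le hbb hr'S
      have h2 : F.act (F.act x r') (r - r') ∈ C := by
        have e : r' + (r - r') = r := by ring
        rw [F.act_add, e]; exact hrS.2
      have := hlac _ hr'S.2 (r - r') (by linarith) h2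
      linarith
  exact ⟨hmem, fun s hs => hinf ▸ csInf_le hbb hs⟩

lemma leastNeg (hlam : 0 < lam) (hC : F.SRegular C {lam}) {x : X} (hx : x ∈ C) :
    IsLeast {r : ℝ | 0 < r ∧ F.act x (-r) ∈ C} lam := by
  obtain ⟨c, hc, hlac⟩ := hC.1.2.2.2.1
  have hbi := hC.1.2.2.2.2
  set S : Set ℝ := {r | 0 < r ∧ F.act x (-r) ∈ C} with hS
  have hbdd : ∀ r ∈ S, c ≤ r := by
    rintro r ⟨hr, hrC⟩
    have h : F.act (F.act x (-r)) r ∈ C := by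
      rw [F.act_add, neg_add_cancel, F.act_zero]; exact hx
    exact hlac _ hrC r hr h
  have hne : S.Nonempty := by
    obtain ⟨r, hrC, hrlt⟩ := not_bddBelow_iff.mp (hbi x hx).2 0
    exact ⟨-r, by simpa using hrlt, by simpa using hrC⟩
  have hbb : BddBelow S := ⟨c, hbdd⟩
  set m := sInf S with hm
  have hmem : m ∈ S := by
    have h1 : sInf S < m + c := by
      rw [← hm]; linarith [le_csInf hne hbdd]
    obtain ⟨r, hrS, hrlt⟩ := exists_lt_of_csInf_lt hne h1
    have hmr : m ≤ r := csInf_le hbb hrS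
    rcases eq_or_lt_of_le hmr with h | h
    · rwa [h]
    · exfalso
      obtain ⟨r', hr'S, hr'lt⟩ := exists_lt_of_csInf_lt hne (show sInf S < r from h)
      have hmr' : m ≤ r' := csInf_le hbb hr'S
      have h2 : F.act (F.act x (-r)) (r - r') ∈ C := by
        have e : -r + (r - r') = -r' := by ring
        rw [F.act_add, e]; exact hr'S.2
      have := hlac _ hrS.2 (r - r') (by linarith) h2
      linarith
  have hyC : F.act x (-m) ∈ C := hmem.2
  have hL := leastPos F hlam hC hyC
  have hm1 : lam ≤ m := by
    refine hL.2 ⟨hmem.1, ?_⟩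
    rw [F.act_add, neg_add_cancel, F.act_zero]; exact hx
  rcases eq_or_lt_of_le hm1 with h | h
  · exact ⟨h ▸ hmem, fun s hs => h ▸ csInf_le hbb hs⟩
  · exfalso
    have h2 : F.act (F.act x (-m)) lam ∈ C := hL.1.2
    have h3 : F.act x (-(m - lam)) ∈ C := by
      have e : -m + lam = -(m - lam) := by ring
      rwa [F.act_add, e] at h2
    have h4 : m ≤ m - lam := csInf_le hbb ⟨by linarith, h3⟩
    linarith

lemma crossings (hlam : 0 < lam) (hC : F.SRegular C {lam}) {x : X} (hx : x ∈ C) (r : ℝ) :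
    F.act x r ∈ C ↔ ∃ n : ℤ, r = n * lam := by
  have hmul : ∀ n : ℤ, F.act x ((n : ℝ) * lam) ∈ C := by
    intro n
    induction n using Int.induction_on with
    | zero => simpa [F.act_zero] using hx
    | succ n ih =>
      have h := (leastPos F hlam hC ih).1.2
      rw [F.act_add] at h
      have e : ((n : ℤ) : ℝ) * lam + lam = (((n : ℤ) + 1 : ℤ) : ℝ) * lam := by push_cast; ring
      rwa [e] at h
    | pred n ih =>
      have h := (leastNeg F hlam hC ih).1.2
      rw [F.act_add] at h
      have e : ((-(n : ℤ) : ℤ) : ℝ) * lam + -lam = (((-(n : ℤ) - 1 : ℤ)) : ℝ) * lam := by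
        push_cast; ring
      rwa [e] at h
  constructor
  · intro hr
    set n := ⌊r / lam⌋ with hn
    have h1 : (n : ℝ) * lam ≤ r := by
      have := Int.floor_le (r / lam)
      calc (n : ℝ) * lam ≤ (r / lam) * lam := by
            exact mul_le_mul_of_nonneg_right this hlam.le
        _ = r := div_mul_cancel₀ r hlam.ne'
    have h2 : r < (n : ℝ) * lam + lam := by
      have h := Int.lt_floor_add_one (r / lam)
      have h2' := mul_lt_mul_of_pos_right h hlam
      rw [add_mul, div_mul_cancel₀ r hlam.ne', one_mul] at h2'
      linarith
    by_cases ht : r = (n : ℝ) * lam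
    · exact ⟨n, ht⟩
    · exfalso
      have htpos : 0 < r - (n : ℝ) * lam := lt_of_le_of_ne (by linarith) (fun h => ht (by linarith))
      have hyC := hmul n
      have h3 : F.act (F.act x ((n : ℝ) * lam)) (r - (n : ℝ) * lam) ∈ C := by
        have e : (n : ℝ) * lam + (r - (n : ℝ) * lam) = r := by ring
        rw [F.act_add, e]; exact hr
      have := (leastPos F hlam hC hyC).2 ⟨htpos, h3⟩
      linarith
  · rintro ⟨n, rfl⟩; exact hmul n

lemma rep (hlam : 0 < lam) (hC : F.SRegular C {lam}) (x : X) :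
    ∃ y ∈ C, ∃ t : ℝ, 0 ≤ t ∧ t < lam ∧ F.act y t = x := by
  obtain ⟨r, hr⟩ := hC.1.2.2.1 x (Set.mem_univ x)
  set n := ⌈r / lam⌉ with hn
  set t := (n : ℝ) * lam - r with htdef
  have ht0 : 0 ≤ t := by
    have h := Int.le_ceil (r / lam)
    have h2 := mul_le_mul_of_nonneg_right h hlam.le
    rw [div_mul_cancel₀ r hlam.ne'] at h2
    rw [htdef]; linarith
  have htl : t < lam := by
    have h := Int.ceil_lt_add_one (r / lam)
    have h2 := mul_lt_mul_of_pos_right h hlam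
    rw [add_mul, div_mul_cancel₀ r hlam.ne', one_mul] at h2
    rw [htdef]; linarith
  refine ⟨F.act x (-t), ?_, t, ht0, htl, ?_⟩
  · have hmem : F.act (F.act x r) ((-n : ℝ) * lam) ∈ C :=
      (crossings F hlam hC hr _).mpr ⟨-n, by push_cast; ring⟩
    rw [F.act_add] at hmem
    have e : r + (-n : ℝ) * lam = -t := by rw [htdef]; ring
    rwa [e] at hmem
  · rw [F.act_add, neg_add_cancel, F.act_zero]

lemma uniq (hlam : 0 < lam) (hC : F.SRegular C {lam}) {y y' : X} {t t' : ℝ}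
    (hy : y ∈ C) (hy' : y' ∈ C) (ht0 : 0 ≤ t) (htl : t < lam) (ht0' : 0 ≤ t') (htl' : t' < lam)
    (he : F.act y t = F.act y' t') : y = y' ∧ t = t' := by
  have h1 : F.act y (t - t') = y' := by
    have e : t + -t' = t - t' := by ring
    calc F.act y (t - t') = F.act (F.act y t) (-t') := by rw [F.act_add, e]
      _ = F.act (F.act y' t') (-t') := by rw [he]
      _ = y' := by rw [F.act_add, add_neg_cancel, F.act_zero]
  have h2 : F.act y (t - t') ∈ C := by rw [h1]; exact hy'
  obtain ⟨n, hn⟩ := (crossings F hlam hC hy (t - t')).mp h2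
  have hn0 : n = 0 := by
    have hb : -lam < (n : ℝ) * lam := by rw [← hn]; linarith
    have hb2 : (n : ℝ) * lam < lam := by rw [← hn]; linarith
    have hq1 : (-1 : ℝ) < (n : ℝ) := by nlinarith
    have hq2 : (n : ℝ) < 1 := by nlinarith
    have hq1' : (-1 : ℤ) < n := by exact_mod_cast hq1
    have hq2' : n < (1 : ℤ) := by exact_mod_cast hq2
    omega
  have ht : t = t' := by
    have : t - t' = 0 := by rw [hn, hn0]; simp
    linarith
  refine ⟨?_, ht⟩
  rw [← h1, ht, sub_self, F.act_zero]

noncomputable def sFun (F : BorelFlow X) (C : Set X) (x : X) : ℝ :=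
  sInf {t : ℝ | 0 ≤ t ∧ F.act x (-t) ∈ C}

lemma sFun_eq (hlam : 0 < lam) (hC : F.SRegular C {lam}) {y : X} {t : ℝ}
    (hy : y ∈ C) (ht0 : 0 ≤ t) (htl : t < lam) : sFun F C (F.act y t) = t := by
  apply IsLeast.csInf_eq
  constructor
  · exact ⟨ht0, by rw [F.act_add, add_neg_cancel, F.act_zero]; exact hy⟩
  · rintro u ⟨hu0, huC⟩
    by_contra h
    push_neg at h
    have he : F.act (F.act (F.act y t) (-u)) u = F.act y t := by
      rw [F.act_add, neg_add_cancel, F.act_zero]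
    have := uniq F hlam hC huC hy hu0 (lt_trans h htl) ht0 htl he
    exact absurd this.2 (ne_of_lt h)

lemma sFun_lt (hlam : 0 < lam) (hC : F.SRegular C {lam}) (a : ℝ) :
    {x : X | sFun F C x < a} = Function.uncurry F.act '' (C ×ˢ Set.Ico (0 : ℝ) (min a lam)) := by
  ext x
  constructor
  · intro hx
    obtain ⟨y, hy, t, ht0, htl, hyt⟩ := rep F hlam hC x
    have hst : sFun F C x = t := by rw [← hyt]; exact sFun_eq F hlam hC hy ht0 htl
    have hta : t < a := by rw [← hst]; exact hx
    exact ⟨(y, t), ⟨hy, ht0, lt_min hta htl⟩, hyt⟩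
  · rintro ⟨⟨y, t⟩, ⟨hy, ht0, htl⟩, rfl⟩
    have htlam : t < lam := lt_of_lt_of_le htl (min_le_right _ _)
    have : sFun F C (F.act y t) = t := sFun_eq F hlam hC hy ht0 htlam
    show sFun F C (F.act y t) < a
    rw [this]
    exact lt_of_lt_of_le htl (min_le_left _ _)

lemma sFun_measurable [StandardBorelSpace X] (hlam : 0 < lam) (hC : F.SRegular C {lam}) :
    Measurable (sFun F C) := by
  apply measurable_of_Iio
  intro a
  have h : sFun F C ⁻¹' Set.Iio a = {x | sFun F C x < a} := rfl
  rw [h, sFun_lt F hlam hC a]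
  have hCm : MeasurableSet C := hC.1.1
  refine (hCm.prod measurableSet_Ico).image_of_measurable_injOn F.measurable ?_
  rintro ⟨y, t⟩ ⟨hy, ht0, htl⟩ ⟨y', t'⟩ ⟨hy', ht0', htl'⟩ he
  have h2 := uniq F hlam hC hy hy' ht0 (lt_of_lt_of_le htl (min_le_right _ _)) ht0'
    (lt_of_lt_of_le htl' (min_le_right _ _)) he
  exact Prod.ext h2.1 h2.2

end AmbroseAux

open AmbroseAux

/-- Ambrose's criterion. A free Borel flow on a standard Borel space admits a
`{λ}`-regular cross section if and only if there is a Borel function `f : X → ℂ \ {0}` with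
`f(x + r) = e^{2πir/λ} · f(x)` for all `x` and `r`. -/
theorem ambrose_criterion {X : Type*} [MeasurableSpace X] [StandardBorelSpace X]
    (F : BorelFlow X) (hfree : F.Free) (lam : ℝ) (hlam : 0 < lam) :
    (∃ C : Set X, F.SRegular C {lam}) ↔
      (∃ f : X → ℂ, Measurable f ∧ (∀ x, f x ≠ 0) ∧
        ∀ (x : X) (r : ℝ),
          f (F.act x r) = Complex.exp (2 * Real.pi * Complex.I * r / lam) * f x) := by
  constructor
  · -- forward direction
    rintro ⟨C, hC⟩
    refine ⟨fun x => Complex.exp (2 * Real.pi * Complex.I * (sFun F C x) / lam), ?_, ?_, ?_⟩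
    · have h1 := sFun_measurable F hlam hC
      have h2 : Measurable fun x => ((sFun F C x : ℝ) : ℂ) := Complex.measurable_ofReal.comp h1
      exact Complex.continuous_exp.measurable.comp
        ((h2.const_mul (2 * (Real.pi : ℂ) * Complex.I)).div_const lam)
    · intro x; exact Complex.exp_ne_zero _
    · intro x r
      obtain ⟨y, hy, t, ht0, htl, hyt⟩ := rep F hlam hC x
      subst hyt
      set n := ⌊(t + r) / lam⌋ with hn
      set t'' := t + r - (n : ℝ) * lam with ht''
      have h1 : 0 ≤ t'' := by
        have h := Int.floor_le ((t + r) / lam)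
        have h2 := mul_le_mul_of_nonneg_right h hlam.le
        rw [div_mul_cancel₀ _ hlam.ne'] at h2
        rw [ht'']; linarith
      have h2 : t'' < lam := by
        have h := Int.lt_floor_add_one ((t + r) / lam)
        have h2' := mul_lt_mul_of_pos_right h hlam
        rw [add_mul, div_mul_cancel₀ _ hlam.ne', one_mul] at h2'
        rw [ht'']; linarith
      have hy'' : F.act y ((n : ℝ) * lam) ∈ C := (crossings F hlam hC hy _).mpr ⟨n, rfl⟩
      have he : F.act (F.act y t) r = F.act (F.act y ((n : ℝ) * lam)) t'' := by
        rw [F.act_add, F.act_add]; congr 1; rw [ht'']; ring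
      have hs1 : sFun F C (F.act (F.act y t) r) = t'' := by
        rw [he]; exact sFun_eq F hlam hC hy'' h1 h2
      have hs2 : sFun F C (F.act y t) = t := sFun_eq F hlam hC hy ht0 htl
      simp only [hs1, hs2]
      have hlamC : ((lam : ℝ) : ℂ) ≠ 0 := Complex.ofReal_ne_zero.mpr hlam.ne'
      have harg : (2 * (Real.pi : ℂ) * Complex.I * (t'' : ℝ) / lam : ℂ) =
          (2 * (Real.pi : ℂ) * Complex.I * (r : ℝ) / lam
            + 2 * (Real.pi : ℂ) * Complex.I * (t : ℝ) / lam) - (n : ℂ) * (2 * Real.pi * Complex.I) := by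
        rw [ht'']; push_cast; field_simp; ring
      rw [harg, Complex.exp_sub, Complex.exp_int_mul_two_pi_mul_I, div_one, Complex.exp_add]
  · -- backward direction
    rintro ⟨f, hfm, hf0, hfe⟩
    set C : Set X := {x | (f x).im = 0 ∧ 0 < (f x).re} with hCdef
    have hπ : Real.pi ≠ 0 := Real.pi_ne_zero
    have key : ∀ x ∈ C, ∀ r : ℝ, (F.act x r ∈ C ↔ ∃ n : ℤ, r = n * lam) := by
      intro x hx r
      obtain ⟨him, hre⟩ := hx
      set θ := 2 * Real.pi * r / lam with hθ
      have hw : (2 * (Real.pi : ℂ) * Complex.I * (r : ℝ) / lam : ℂ) = (θ : ℝ) * Complex.I := by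
        rw [hθ]; push_cast; field_simp
      have hfxr : f (F.act x r) = Complex.exp ((θ : ℝ) * Complex.I) * f x := by
        rw [hfe, hw]
      have hmem : F.act x r ∈ C ↔ (Real.sin θ = 0 ∧ 0 < Real.cos θ) := by
        have him' : (f (F.act x r)).im = Real.cos θ * (f x).im + Real.sin θ * (f x).re := by
          rw [hfxr, Complex.mul_im, Complex.exp_ofReal_mul_I_re, Complex.exp_ofReal_mul_I_im]
        have hre' : (f (F.act x r)).re = Real.cos θ * (f x).re - Real.sin θ * (f x).im := by
          rw [hfxr, Complex.mul_re, Complex.exp_ofReal_mul_I_re, Complex.exp_ofReal_mul_I_im]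
        constructor
        · rintro ⟨ha, hb⟩
          rw [him', him, mul_zero, zero_add] at ha
          rw [hre', him, mul_zero, sub_zero] at hb
          have hsin : Real.sin θ = 0 := by
            rcases mul_eq_zero.mp ha with h | h
            · exact h
            · exact absurd h hre.ne'
          refine ⟨hsin, ?_⟩
          by_contra hcos
          push_neg at hcos
          nlinarith
        · rintro ⟨hsin, hcos⟩
          constructor
          · rw [him', him, hsin, mul_zero, zero_add, zero_mul]
          · rw [hre', him, hsin, mul_zero, sub_zero]
            exact mul_pos hcos hre
      rw [hmem]
      constructor
      · rintro ⟨hsin, hcos⟩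
        have hcos1 : Real.cos θ = 1 := by
          have hsq : Real.sin θ ^ 2 + Real.cos θ ^ 2 = 1 := Real.sin_sq_add_cos_sq θ
          nlinarith
        obtain ⟨m, hm⟩ := (Real.cos_eq_one_iff θ).mp hcos1
        refine ⟨m, ?_⟩
        rw [hθ] at hm
        have h2 : (m : ℝ) * (2 * Real.pi) * lam = 2 * Real.pi * r := by
          field_simp at hm
          rw [← hm]; ring
        have h3 : (2 * Real.pi) * ((m : ℝ) * lam) = (2 * Real.pi) * r := by ring_nf; ring_nf at h2; linarith
        have h2π : (2 * Real.pi) ≠ 0 := by positivity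
        exact (mul_left_cancel₀ h2π h3).symm
      · rintro ⟨m, rfl⟩
        have hθeq : θ = (m : ℝ) * (2 * Real.pi) := by
          rw [hθ]; field_simp
        constructor
        · rw [hθeq]
          have : ((m : ℝ) * (2 * Real.pi)) = ((2 * m : ℤ) : ℝ) * Real.pi := by push_cast; ring
          rw [this]; exact Real.sin_int_mul_pi _
        · rw [hθeq, Real.cos_int_mul_two_pi]; exact one_pos
    have hCmeas : MeasurableSet C := by
      have h1 : MeasurableSet {z : ℂ | z.im = 0 ∧ 0 < z.re} :=
        (Complex.measurable_im (measurableSet_singleton 0)).inter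
          (Complex.measurable_re measurableSet_Ioi)
      exact hfm h1
    refine ⟨C, ⟨⟨hCmeas, Set.subset_univ C, ?_, ⟨lam, hlam, ?_⟩, ?_⟩, ?_⟩⟩
    · -- meets every orbit
      intro x _
      set z := f x with hz
      have hzne : z ≠ 0 := hf0 x
      refine ⟨-(z.arg) * lam / (2 * Real.pi), ?_⟩
      have hw : (2 * (Real.pi : ℂ) * Complex.I * ((-(z.arg) * lam / (2 * Real.pi) : ℝ) : ℂ) / lam : ℂ)
          = (-(z.arg) : ℝ) * Complex.I := by
        push_cast
        have hlamC : ((lam : ℝ) : ℂ) ≠ 0 := Complex.ofReal_ne_zero.mpr hlam.ne'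
        have hπC : ((Real.pi : ℝ) : ℂ) ≠ 0 := Complex.ofReal_ne_zero.mpr hπ
        field_simp
      have hfx : f (F.act x (-(z.arg) * lam / (2 * Real.pi))) = ((‖z‖ : ℝ) : ℂ) := by
        rw [hfe, hw, ← hz]
        calc Complex.exp ((-(z.arg) : ℝ) * Complex.I) * z
            = Complex.exp ((-(z.arg) : ℝ) * Complex.I) * ((‖z‖ : ℝ) * Complex.exp (z.arg * Complex.I)) := by
              rw [Complex.norm_mul_exp_arg_mul_I]
          _ = ((‖z‖ : ℝ) : ℂ) * Complex.exp (((-(z.arg) : ℝ)) * Complex.I + z.arg * Complex.I) := by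
              rw [Complex.exp_add]; ring
          _ = ((‖z‖ : ℝ) : ℂ) := by
              have : ((-(z.arg) : ℝ) : ℂ) * Complex.I + (z.arg : ℝ) * Complex.I = 0 := by
                push_cast; ring
              rw [this, Complex.exp_zero, mul_one]
      constructor
      · rw [hfx]; exact Complex.ofReal_im _
      · rw [hfx]
        simp only [Complex.ofReal_re]
        exact norm_pos_iff.mpr hzne
    · -- lacunary with constant lam
      intro x hx r hr hrC
      obtain ⟨m, rfl⟩ := (key x hx r).mp hrC
      have hm1 : (1 : ℝ) ≤ (m : ℝ) := by
        have hmpos : (0 : ℝ) < (m : ℝ) := by nlinarith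
        have : (0 : ℤ) < m := by exact_mod_cast hmpos
        exact_mod_cast this
      nlinarith
    · -- bi-infinite
      intro x hx
      constructor
      · rw [not_bddAbove_iff]
        intro b
        set m := ⌈b / lam⌉ + 1 with hm
        refine ⟨(m : ℝ) * lam, (key x hx _).mpr ⟨m, rfl⟩, ?_⟩
        have h := Int.le_ceil (b / lam)
        have h2 := mul_le_mul_of_nonneg_right h hlam.le
        rw [div_mul_cancel₀ _ hlam.ne'] at h2
        have : ((m : ℤ) : ℝ) = (⌈b / lam⌉ : ℝ) + 1 := by rw [hm]; push_cast; ring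
        rw [this]; nlinarith
      · rw [not_bddBelow_iff]
        intro b
        set m := ⌊b / lam⌋ - 1 with hm
        refine ⟨(m : ℝ) * lam, (key x hx _).mpr ⟨m, rfl⟩, ?_⟩
        have h := Int.floor_le (b / lam)
        have h2 := mul_le_mul_of_nonneg_right h hlam.le
        rw [div_mul_cancel₀ _ hlam.ne'] at h2
        have : ((m : ℤ) : ℝ) = (⌊b / lam⌋ : ℝ) - 1 := by rw [hm]; push_cast; ring
        rw [this]; nlinarith
    · -- gaps equal lam
      intro x hx
      have hL : IsLeast {r : ℝ | 0 < r ∧ F.act x r ∈ C} lam := by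
        constructor
        · exact ⟨hlam, (key x hx lam).mpr ⟨1, by norm_num⟩⟩
        · rintro r ⟨hr, hrC⟩
          obtain ⟨m, rfl⟩ := (key x hx r).mp hrC
          have hm1 : (1 : ℝ) ≤ (m : ℝ) := by
            have hmpos : (0 : ℝ) < (m : ℝ) := by nlinarith
            have : (0 : ℤ) < m := by exact_mod_cast hmpos
            exact_mod_cast this
          nlinarith
      show F.gap C x ∈ ({lam} : Set ℝ)
      rw [Set.mem_singleton_iff]
      exact hL.csInf_eq
end

section
/- Let S ⊆ ℝ^{>0} be a nonempty set of positive reals. The following are equivalent: (i) the subgroup ⟨S⟩ of (ℝ, +) generated by S is dense in ℝ; (ii) for every ε > 0 there exist a finite subset F ⊆ S and K ≥ 0 such that 𝒯(F) is ε-dense in [K, ∞); (iii) 𝒯(S) is asymptotically dense in ℝ. -/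
/-- `𝒯(S)`: the additive semigroup generated by `S`, i.e. all finite sums
`s₁ + ⋯ + sₙ` with `n ≥ 1` and `sₖ ∈ S`. -/
def semigroupGen (S : Set ℝ) : Set ℝ :=
  { x | ∃ l : List ℝ, l ≠ [] ∧ (∀ s ∈ l, s ∈ S) ∧ l.sum = x }

/-- `A` is `ε`-dense in `I`: every open subinterval of `I` of length `ε` meets `A`. -/
def EpsDenseIn (A : Set ℝ) (ε : ℝ) (I : Set ℝ) : Prop :=
  ∀ x : ℝ, Set.Ioo x (x + ε) ⊆ I → (Set.Ioo x (x + ε) ∩ A).Nonempty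

/-- `A` is asymptotically dense in `ℝ`: for every `ε > 0` there is `K ≥ 0` such that
`A` is `ε`-dense in `[K, ∞)`. -/
def AsympDense (A : Set ℝ) : Prop :=
  ∀ ε > 0, ∃ K ≥ 0, EpsDenseIn A ε (Set.Ici K)

lemma semigroupGen_mono {S T : Set ℝ} (h : S ⊆ T) : semigroupGen S ⊆ semigroupGen T := by
  rintro x ⟨l, h1, h2, h3⟩
  exact ⟨l, h1, fun s hs => h (h2 s hs), h3⟩

lemma mem_semigroupGen_of_mem {S : Set ℝ} {a : ℝ} (ha : a ∈ S) : a ∈ semigroupGen S :=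
  ⟨[a], by simp, by simpa using ha, by simp⟩

lemma add_mem_semigroupGen {S : Set ℝ} {a b : ℝ}
    (ha : a ∈ semigroupGen S) (hb : b ∈ semigroupGen S) : a + b ∈ semigroupGen S := by
  obtain ⟨l, h1, h2, h3⟩ := ha
  obtain ⟨l', h1', h2', h3'⟩ := hb
  refine ⟨l ++ l', by simp [h1], ?_, by simp [h3, h3']⟩
  intro s hs
  rcases List.mem_append.1 hs with h | h
  exacts [h2 s h, h2' s h]

lemma nsmul_mem_semigroupGen {S : Set ℝ} {a : ℝ} (ha : a ∈ S) {n : ℕ} (hn : 1 ≤ n) :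
    (n : ℝ) * a ∈ semigroupGen S := by
  refine ⟨List.replicate n a, ?_, ?_, ?_⟩
  · intro h
    have := congrArg List.length h
    simp at this
    omega
  · intro s hs; rw [List.eq_of_mem_replicate hs]; exact ha
  · simp [List.sum_replicate, nsmul_eq_mul]

lemma sum_mem_semigroupGen (F : Finset ℝ) (hF : F.Nonempty) (c : ℝ → ℕ)
    (hc : ∀ i ∈ F, 1 ≤ c i) : (∑ i ∈ F, (c i : ℝ) * i) ∈ semigroupGen (F : Set ℝ) := by
  induction F using Finset.cons_induction with
  | empty => simp at hF
  | cons a F ha ih =>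
    rw [Finset.sum_cons]
    rcases F.eq_empty_or_nonempty with rfl | hF'
    · simpa using nsmul_mem_semigroupGen (S := (({a} : Finset ℝ) : Set ℝ)) (by simp)
        (hc a (by simp))
    · refine add_mem_semigroupGen ?_ ?_
      · exact nsmul_mem_semigroupGen (by simp) (hc a (by simp))
      · refine semigroupGen_mono ?_ (ih hF' fun i hi => hc i (by simp [hi]))
        intro x hx; simp at hx ⊢; exact Or.inr hx

lemma semigroupGen_subset_closure {S : Set ℝ} :
    semigroupGen S ⊆ (AddSubgroup.closure S : Set ℝ) := by
  rintro x ⟨l, -, h2, rfl⟩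
  induction l with
  | nil => simpa using (AddSubgroup.closure S).zero_mem
  | cons a l ih =>
    simp only [List.sum_cons]
    exact (AddSubgroup.closure S).add_mem
      (AddSubgroup.subset_closure (h2 a (by simp)))
      (ih fun s hs => h2 s (by simp [hs]))

lemma exists_finset_closure {S : Set ℝ} {x : ℝ} (hx : x ∈ AddSubgroup.closure S) :
    ∃ F : Finset ℝ, (F : Set ℝ) ⊆ S ∧ x ∈ AddSubgroup.closure ((F : Set ℝ)) := by
  induction hx using AddSubgroup.closure_induction with
  | mem y hy => exact ⟨{y}, by simpa using hy, AddSubgroup.subset_closure (by simp)⟩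
  | zero => exact ⟨∅, by simp, by simp⟩
  | add x y hx hy ihx ihy =>
    obtain ⟨F, hFS, hxF⟩ := ihx
    obtain ⟨G, hGS, hyG⟩ := ihy
    refine ⟨F ∪ G, by simp [Set.union_subset_iff, hFS, hGS], ?_⟩
    have h1 : x ∈ AddSubgroup.closure ((↑(F ∪ G) : Set ℝ)) :=
      AddSubgroup.closure_mono (by simp [Set.subset_def]; intro a ha; exact Or.inl ha) hxF
    have h2 : y ∈ AddSubgroup.closure ((↑(F ∪ G) : Set ℝ)) :=
      AddSubgroup.closure_mono (by simp [Set.subset_def]; intro a ha; exact Or.inr ha) hyG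
    exact add_mem h1 h2
  | neg x hx ihx =>
    obtain ⟨F, hFS, hxF⟩ := ihx
    exact ⟨F, hFS, neg_mem hxF⟩

lemma eps_dense_key (F : Finset ℝ) (hF : F.Nonempty) (hpos : ∀ i ∈ F, (0:ℝ) < i)
    {ε g : ℝ} (hε : 0 < ε) (hg0 : 0 < g) (hgε : g < ε)
    (hg : g ∈ AddSubgroup.closure (F : Set ℝ)) :
    ∃ K ≥ (0:ℝ), EpsDenseIn (semigroupGen (F : Set ℝ)) ε (Set.Ici K) := by
  have hg' : g ∈ Submodule.span ℤ (F : Set ℝ) := by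
    rw [← Submodule.mem_toAddSubgroup, Submodule.span_int_eq_addSubgroupClosure]
    exact hg
  obtain ⟨f, -, hf⟩ := Submodule.mem_span_finset.1 hg'
  set σ : ℝ := ∑ i ∈ F, i with hσdef
  have hσ : 0 < σ := Finset.sum_pos hpos hF
  set N : ℕ := F.sup fun i => (f i).natAbs with hNdef
  have hN : ∀ i ∈ F, (f i).natAbs ≤ N := fun i hi => Finset.le_sup (f := fun i => (f i).natAbs) hi
  set M : ℕ := ⌈σ / g⌉₊ + 1 with hMdef
  have hM1 : σ ≤ M * g := by
    have h1 : σ / g ≤ (⌈σ / g⌉₊ : ℝ) := Nat.le_ceil _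
    have h2 : (⌈σ / g⌉₊ : ℝ) ≤ M := by rw [hMdef]; push_cast; linarith
    calc σ = (σ / g) * g := by field_simp
    _ ≤ (M : ℝ) * g := by nlinarith
  set R : ℕ := M * N + 1 with hRdef
  set K : ℝ := (R : ℝ) * σ with hKdef
  have hK0 : 0 ≤ K := by positivity
  refine ⟨K, hK0, ?_⟩
  intro x hx
  have hmid : K ≤ x + ε / 2 := hx ⟨by linarith, by linarith⟩
  have hxK : K ≤ x := by
    by_contra h
    push_neg at h
    have := hx (show (x + K) / 2 ∈ Set.Ioo x (x + ε) from ⟨by linarith, by linarith⟩)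
    simp only [Set.mem_Ici] at this
    linarith
  set k : ℕ := ⌊(x - K) / σ⌋₊ with hkdef
  set u : ℝ := x - K - k * σ with hudef
  have hu0 : 0 ≤ u := by
    have h1 : (k : ℝ) ≤ (x - K) / σ := Nat.floor_le (div_nonneg (by linarith) hσ.le)
    have : (k : ℝ) * σ ≤ x - K := by
      calc (k : ℝ) * σ ≤ ((x - K) / σ) * σ := by nlinarith
      _ = x - K := by field_simp
    linarith
  have huσ : u < σ := by
    have h1 : (x - K) / σ < k + 1 := Nat.lt_floor_add_one _
    have : x - K < (k + 1) * σ := by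
      calc x - K = ((x - K) / σ) * σ := by field_simp
      _ < ((k : ℝ) + 1) * σ := by nlinarith
    nlinarith
  set j : ℕ := ⌊u / g⌋₊ + 1 with hjdef
  have hjg1 : u < j * g := by
    have h1 : u / g < ⌊u / g⌋₊ + 1 := Nat.lt_floor_add_one _
    have : u < (⌊u / g⌋₊ + 1 : ℝ) * g := by
      calc u = (u / g) * g := by field_simp
      _ < (⌊u / g⌋₊ + 1 : ℝ) * g := by nlinarith
    rw [hjdef]; push_cast; linarith
  have hjg2 : (j : ℝ) * g ≤ u + g := by
    have h1 : (⌊u / g⌋₊ : ℝ) ≤ u / g := Nat.floor_le (div_nonneg hu0 hg0.le)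
    have : (⌊u / g⌋₊ : ℝ) * g ≤ u := by
      calc (⌊u / g⌋₊ : ℝ) * g ≤ (u / g) * g := by nlinarith
      _ = u := by field_simp
    rw [hjdef]; push_cast; linarith
  have hjM : j ≤ M := by
    have h1 : (⌊u / g⌋₊ : ℝ) ≤ u / g := Nat.floor_le (div_nonneg hu0 hg0.le)
    have h2 : u / g < σ / g := by
      apply div_lt_div_of_pos_right huσ hg0
    have h3 : σ / g ≤ (⌈σ / g⌉₊ : ℝ) := Nat.le_ceil _
    have h4 : (⌊u / g⌋₊ : ℝ) < (⌈σ / g⌉₊ : ℝ) := by linarith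
    have h5 : ⌊u / g⌋₊ < ⌈σ / g⌉₊ := by exact_mod_cast h4
    omega
  set p : ℝ := K + k * σ + j * g with hpdef
  have hp1 : x < p := by
    have : x = K + k * σ + u := by rw [hudef]; ring
    rw [hpdef, this]; linarith
  have hp2 : p < x + ε := by
    have : x = K + k * σ + u := by rw [hudef]; ring
    rw [hpdef, this]; linarith
  set c : ℝ → ℕ := fun i => ((R : ℤ) + k + j * f i).toNat with hcdef
  have hci : ∀ i ∈ F, (1 : ℤ) ≤ (R : ℤ) + k + j * f i := by
    intro i hi
    have ha : |f i| ≤ (N : ℤ) := by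
      rw [Int.abs_eq_natAbs]; exact_mod_cast hN i hi
    have h3 : -(N : ℤ) ≤ f i := (abs_le.1 ha).1
    have hb : (j : ℤ) ≤ M := by exact_mod_cast hjM
    have e1 : (j : ℤ) * (-(N : ℤ)) ≤ (j : ℤ) * f i :=
      mul_le_mul_of_nonneg_left h3 (by positivity)
    have e2 : (M : ℤ) * (-(N : ℤ)) ≤ (j : ℤ) * (-(N : ℤ)) :=
      mul_le_mul_of_nonpos_right hb (by simp)
    have hR : (R : ℤ) = (M : ℤ) * (N : ℤ) + 1 := by rw [hRdef]; push_cast; ring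
    have hk0 : (0 : ℤ) ≤ (k : ℤ) := Int.ofNat_nonneg k
    nlinarith
  have hc1 : ∀ i ∈ F, 1 ≤ c i := by
    intro i hi
    have h := hci i hi
    simp only [hcdef]
    set z : ℤ := (R : ℤ) + k + j * f i with hz
    omega
  have hcast : ∀ i ∈ F, ((c i : ℝ)) = (R : ℝ) + k + j * (f i : ℝ) := by
    intro i hi
    have h := hci i hi
    have h0 : (0 : ℤ) ≤ (R : ℤ) + k + j * f i := by linarith
    have : ((c i : ℤ)) = (R : ℤ) + k + j * f i := by
      simp only [hcdef]; exact Int.toNat_of_nonneg h0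
    have := congrArg (fun z : ℤ => (z : ℝ)) this
    push_cast at this
    convert this using 2 <;> push_cast <;> ring
  have hfr : ∑ i ∈ F, (f i : ℝ) * i = g := by
    rw [← hf]; exact Finset.sum_congr rfl fun i _ => by rw [zsmul_eq_mul]
  have hsum : ∑ i ∈ F, (c i : ℝ) * i = p := by
    have step : ∑ i ∈ F, (c i : ℝ) * i
        = ∑ i ∈ F, (((R : ℝ) + k) * i + (j : ℝ) * ((f i : ℝ) * i)) :=
      Finset.sum_congr rfl fun i hi => by rw [hcast i hi]; ring
    rw [step, Finset.sum_add_distrib, ← Finset.mul_sum, ← Finset.mul_sum, hfr,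
      hpdef, hKdef, hσdef]
    ring
  exact ⟨p, ⟨hp1, hp2⟩, hsum ▸ sum_mem_semigroupGen F hF c hc1⟩


/-- For a nonempty set `S` of positive reals the following are equivalent:
(i) the subgroup of `(ℝ, +)` generated by `S` is dense in `ℝ`;
(ii) for every `ε > 0` there are a finite `F ⊆ S` and `K ≥ 0` with `𝒯(F)` `ε`-dense in `[K, ∞)`;
(iii) `𝒯(S)` is asymptotically dense in `ℝ`. -/
theorem dense_subgroup_iff_asymp_dense_semigroup (S : Set ℝ) (hS : S.Nonempty)
    (hpos : ∀ s ∈ S, 0 < s) :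
    (Dense (AddSubgroup.closure S : Set ℝ) ↔
      ∀ ε > 0, ∃ F : Finset ℝ, (F : Set ℝ) ⊆ S ∧
        ∃ K ≥ (0 : ℝ), EpsDenseIn (semigroupGen (F : Set ℝ)) ε (Set.Ici K)) ∧
    (Dense (AddSubgroup.closure S : Set ℝ) ↔ AsympDense (semigroupGen S)) := by
  obtain ⟨s₀, hs₀⟩ := hS
  have hs₀pos : 0 < s₀ := hpos s₀ hs₀
  -- (i) → (ii)
  have h12 : Dense (AddSubgroup.closure S : Set ℝ) →
      ∀ ε > 0, ∃ F : Finset ℝ, (F : Set ℝ) ⊆ S ∧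
        ∃ K ≥ (0 : ℝ), EpsDenseIn (semigroupGen (F : Set ℝ)) ε (Set.Ici K) := by
    intro hdense ε hε
    obtain ⟨g, hgball, hgmem⟩ :=
      Metric.dense_iff.1 hdense (ε / 2) (ε / 2) (half_pos hε)
    have hgdist : |g - ε / 2| < ε / 2 := by
      rw [← Real.dist_eq]; exact Metric.mem_ball.1 hgball
    obtain ⟨hg1, hg2⟩ := abs_lt.1 hgdist
    have hg0 : 0 < g := by linarith
    have hgε : g < ε := by linarith
    obtain ⟨F₀, hF₀S, hgF₀⟩ := exists_finset_closure hgmem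
    refine ⟨insert s₀ F₀, ?_, ?_⟩
    · intro t ht
      simp only [Finset.coe_insert, Set.mem_insert_iff] at ht
      rcases ht with rfl | ht
      · exact hs₀
      · exact hF₀S ht
    · refine eps_dense_key (insert s₀ F₀) ⟨s₀, by simp⟩ ?_ hε hg0 hgε ?_
      · intro i hi
        rcases Finset.mem_insert.1 hi with rfl | hi
        · exact hs₀pos
        · exact hpos i (hF₀S hi)
      · refine AddSubgroup.closure_mono ?_ hgF₀
        simp only [Finset.coe_insert]
        exact Set.subset_insert _ _
  -- (ii) → (iii)
  have h23 : (∀ ε > 0, ∃ F : Finset ℝ, (F : Set ℝ) ⊆ S ∧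
      ∃ K ≥ (0 : ℝ), EpsDenseIn (semigroupGen (F : Set ℝ)) ε (Set.Ici K)) →
      AsympDense (semigroupGen S) := by
    intro h ε hε
    obtain ⟨F, hFS, K, hK0, hdense⟩ := h ε hε
    refine ⟨K, hK0, ?_⟩
    intro x hx
    obtain ⟨y, hy1, hy2⟩ := hdense x hx
    exact ⟨y, hy1, semigroupGen_mono hFS hy2⟩
  -- (iii) → (i)
  have h31 : AsympDense (semigroupGen S) → Dense (AddSubgroup.closure S : Set ℝ) := by
    intro h
    rw [Metric.dense_iff]
    intro x r hr
    obtain ⟨K, hK0, hd⟩ := h r hr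
    obtain ⟨n, hn⟩ := exists_nat_ge ((K + r / 2 - x) / s₀)
    have hq : ((K + r / 2 - x) / s₀) * s₀ = K + r / 2 - x :=
      div_mul_cancel₀ _ hs₀pos.ne'
    have hns : K + r / 2 - x ≤ n * s₀ := by
      have := mul_le_mul_of_nonneg_right hn hs₀pos.le
      linarith
    set x' : ℝ := x - r / 2 + n * s₀ with hx'def
    have hx'K : K ≤ x' := by rw [hx'def]; linarith
    obtain ⟨y, hy1, hy2⟩ := hd x' (fun t ht => le_of_lt (lt_of_le_of_lt hx'K ht.1))
    refine ⟨y - n * s₀, ?_, ?_⟩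
    · rw [Metric.mem_ball, Real.dist_eq, abs_lt]
      obtain ⟨hA, hB⟩ := hy1
      rw [hx'def] at hA hB
      constructor <;> linarith
    · have hy : y ∈ (AddSubgroup.closure S : Set ℝ) := semigroupGen_subset_closure hy2
      have hns : (n : ℝ) * s₀ ∈ AddSubgroup.closure S := by
        have : (n : ℝ) * s₀ = n • s₀ := by simp
        rw [this]
        exact AddSubgroup.nsmul_mem _ (AddSubgroup.subset_closure hs₀) n
      exact sub_mem hy hns
  exact ⟨⟨h12, fun h => h31 (h23 h)⟩, ⟨fun h => h23 (h12 h), h31⟩⟩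
end

section
/- Let ε > 0, let d ∈ ℝ, and let R ⊆ U_ε(d) be nonempty. If y_1, …, y_n ∈ R are such that |n·d − Σ_{i=1}^n y_i| < ε, then Σ_{i=1}^n y_i ∈ A_n(ε, d, R). -/
/-- `U_ε(x)`: the open `ε`-neighborhood `(x - ε, x + ε)`. -/
def USet (ε x : ℝ) : Set ℝ := Set.Ioo (x - ε) (x + ε)

/-- `A(ε, (dᵢ), (Rᵢ))`: the set of `z ∈ U_ε(d₁ + ⋯ + dₙ)` which can be written as
`z = x₁ + ⋯ + xₙ` with `xᵢ ∈ Rᵢ` and `|Σ_{i ≤ r} (dᵢ - xᵢ)| < ε` for all `r ≤ n`. -/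
def ASeq (ε : ℝ) (n : ℕ) (d : ℕ → ℝ) (R : ℕ → Set ℝ) : Set ℝ :=
  { z | z ∈ USet ε (∑ i ∈ Finset.range n, d i) ∧
    ∃ x : ℕ → ℝ, (∀ i < n, x i ∈ R i) ∧ z = ∑ i ∈ Finset.range n, x i ∧
      ∀ r ≤ n, |∑ i ∈ Finset.range r, (d i - x i)| < ε }

/-- `A_n(ε, d, R)`: the set `A(ε, (dᵢ), (Rᵢ))` for constant sequences `dᵢ = d`, `Rᵢ = R`. -/
def ASet (ε d : ℝ) (R : Set ℝ) (n : ℕ) : Set ℝ := ASeq ε n (fun _ => d) (fun _ => R)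

/-- `g = gcd(a, b)` for reals: either `g > 0` is the greatest common divisor of `a` and `b`
(the largest `c > 0` such that `a` and `b` are integer multiples of `c`), or `g = 0` and no
positive common divisor exists. -/
def IsRealGcd (a b g : ℝ) : Prop :=
  (0 < g ∧ (∃ k : ℤ, a = k * g) ∧ (∃ k : ℤ, b = k * g) ∧
    ∀ c : ℝ, 0 < c → (∃ k : ℤ, a = k * c) → (∃ k : ℤ, b = k * c) → c ≤ g) ∨
  (g = 0 ∧ ∀ c : ℝ, 0 < c → (∃ k : ℤ, a = k * c) → (∃ k : ℤ, b = k * c) → False)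

lemma exists_last (ε : ℝ) (hε : 0 < ε) (n : ℕ) (hn : 0 < n) (a : ℕ → ℝ)
    (ha : ∀ i < n, |a i| < ε) (hT : |∑ i ∈ Finset.range n, a i| < ε) :
    ∃ j < n, |(∑ i ∈ Finset.range n, a i) - a j| < ε := by
  by_contra hc
  push_neg at hc
  set T := ∑ i ∈ Finset.range n, a i with hTdef
  have hn1 : (1 : ℝ) ≤ n := by exact_mod_cast hn
  rw [abs_lt] at hT
  rcases le_or_gt 0 T with h0 | h0
  · have key : ∀ i ∈ Finset.range n, a i ≤ T - ε := by
      intro i hi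
      rw [Finset.mem_range] at hi
      have h1 := hc i hi
      have h2 := ha i hi
      rw [abs_lt] at h2
      rcases le_abs.mp h1 with h3 | h3 <;> linarith
    have sum_le : T ≤ ∑ i ∈ Finset.range n, (T - ε) := Finset.sum_le_sum key
    rw [Finset.sum_const, Finset.card_range, nsmul_eq_mul] at sum_le
    nlinarith
  · have key : ∀ i ∈ Finset.range n, T + ε ≤ a i := by
      intro i hi
      rw [Finset.mem_range] at hi
      have h1 := hc i hi
      have h2 := ha i hi
      rw [abs_lt] at h2
      rcases le_abs.mp h1 with h3 | h3 <;> linarith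
    have sum_le : ∑ i ∈ Finset.range n, (T + ε) ≤ T := Finset.sum_le_sum key
    rw [Finset.sum_const, Finset.card_range, nsmul_eq_mul] at sum_le
    nlinarith

lemma sub_sum_eq (d : ℝ) (m : ℕ) (y : ℕ → ℝ) :
    ∑ i ∈ Finset.range m, (d - y i) = m * d - ∑ i ∈ Finset.range m, y i := by
  rw [Finset.sum_sub_distrib, Finset.sum_const, Finset.card_range, nsmul_eq_mul]

/-- If `y₁, …, yₙ ∈ R` are such that `|n·d − Σ yᵢ| < ε`, then
`Σ yᵢ ∈ A_n(ε, d, R)`. -/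
theorem sum_mem_ASet (ε d : ℝ) (hε : 0 < ε) (R : Set ℝ) (hR : R ⊆ USet ε d)
    (hne : R.Nonempty) (n : ℕ) (y : ℕ → ℝ) (hy : ∀ i < n, y i ∈ R)
    (h : |(n : ℝ) * d - ∑ i ∈ Finset.range n, y i| < ε) :
    (∑ i ∈ Finset.range n, y i) ∈ ASet ε d R n := by
  induction n generalizing y with
  | zero =>
    refine ⟨?_, y, by omega, rfl, ?_⟩
    · simp only [Finset.range_zero, Finset.sum_empty, USet, Set.mem_Ioo]
      constructor <;> linarith
    · intro r hr
      interval_cases r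
      simpa using hε
  | succ n ih =>
    -- find the index to put last
    have hT : |∑ i ∈ Finset.range (n+1), (d - y i)| < ε := by
      rw [sub_sum_eq]; exact_mod_cast h
    obtain ⟨j, hj, hjlt⟩ := exists_last ε hε (n+1) (Nat.succ_pos n) (fun i => d - y i)
      (fun i hi => by
        have := hR (hy i hi)
        simp only [USet, Set.mem_Ioo] at this
        show |d - y i| < ε
        rw [abs_lt]; constructor <;> linarith) hT
    set σ := Equiv.swap j n with hσ
    have hσmem : ∀ i < n + 1, (σ i : ℕ) < n + 1 := by
      intro i hi
      rcases eq_or_ne i j with rfl | hij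
      · simpa [hσ] using Nat.lt_succ_self n
      rcases eq_or_ne i n with rfl | hin
      · simpa [hσ, Equiv.swap_apply_right] using hj
      · rw [hσ, Equiv.swap_apply_of_ne_of_ne hij hin]; exact hi
    have hsum : ∑ i ∈ Finset.range (n+1), y (σ i) = ∑ i ∈ Finset.range (n+1), y i := by
      apply Equiv.Perm.sum_comp
      intro i hi
      simp only [Set.mem_setOf_eq, hσ] at hi
      have : i = j ∨ i = n := by
        by_contra hcon
        push_neg at hcon
        exact hi (Equiv.swap_apply_of_ne_of_ne hcon.1 hcon.2)
      rcases this with rfl | rfl <;> simp [Finset.mem_range, Finset.mem_coe] <;> omega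
    have hyn : y (σ n) = y j := by simp [hσ]
    have hsplit : ∑ i ∈ Finset.range (n+1), y (σ i)
        = (∑ i ∈ Finset.range n, y (σ i)) + y j := by
      rw [Finset.sum_range_succ, hyn]
    have hprefix : |(n : ℝ) * d - ∑ i ∈ Finset.range n, y (σ i)| < ε := by
      have e1 : ∑ i ∈ Finset.range n, y (σ i)
          = (∑ i ∈ Finset.range (n+1), y i) - y j := by
        rw [← hsum, hsplit]; ring
      rw [e1]
      have e2 : ∑ i ∈ Finset.range (n+1), (d - y i)
          = (n+1 : ℕ) * d - ∑ i ∈ Finset.range (n+1), y i := sub_sum_eq d (n+1) y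
      rw [e2] at hjlt
      have : (n : ℝ) * d - ((∑ i ∈ Finset.range (n+1), y i) - y j)
          = ((n+1 : ℕ) : ℝ) * d - (∑ i ∈ Finset.range (n+1), y i) - (d - y j) := by
        push_cast; ring
      rw [this]; exact hjlt
    have hy' : ∀ i < n, y (σ i) ∈ R := fun i hi => hy _ (hσmem i (by omega))
    obtain ⟨hmem, x, hx1, hx2, hx3⟩ := ih (fun i => y (σ i)) hy' hprefix
    set x' : ℕ → ℝ := fun i => if i = n then y j else x i with hx'def
    have hx'n : x' n = y j := by simp [hx'def]
    have hx'lt : ∀ i < n, x' i = x i := fun i hi => by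
      simp [hx'def, Nat.ne_of_lt hi]
    refine ⟨?_, x', ?_, ?_, ?_⟩
    · simp only [USet, Set.mem_Ioo, Finset.sum_const, Finset.card_range, nsmul_eq_mul]
      rw [abs_lt] at h
      push_cast at h ⊢
      constructor <;> linarith
    · intro i hi
      by_cases hie : i = n
      · rw [hie, hx'n]; exact hy j hj
      · rw [hx'lt i (by omega)]; exact hx1 i (by omega)
    · have : ∑ i ∈ Finset.range (n+1), x' i = (∑ i ∈ Finset.range n, x i) + y j := by
        rw [Finset.sum_range_succ, hx'n]
        congr 1
        exact Finset.sum_congr rfl (fun i hi => hx'lt i (Finset.mem_range.mp hi))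
      rw [this, ← hx2, ← hsum, hsplit]
    · intro r hr
      rcases Nat.lt_succ_iff_lt_or_eq.mp (Nat.lt_succ_of_le hr) with hr' | rfl
      · have hrle : r ≤ n := by omega
        have : ∑ i ∈ Finset.range r, (d - x' i)
            = ∑ i ∈ Finset.range r, (d - x i) := by
          apply Finset.sum_congr rfl
          intro i hi
          rw [Finset.mem_range] at hi
          rw [hx'lt i (by omega)]
        rw [this]
        exact hx3 r hrle
      · have : ∑ i ∈ Finset.range (n+1), (d - x' i)
            = (∑ i ∈ Finset.range n, (d - x i)) + (d - y j) := by
          rw [Finset.sum_range_succ, hx'n]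
          congr 1
          apply Finset.sum_congr rfl
          intro i hi
          rw [Finset.mem_range] at hi
          rw [hx'lt i (by omega)]
        rw [this, sub_sum_eq d n x, ← hx2]
        have e1 : ∑ i ∈ Finset.range n, y (σ i)
            = (∑ i ∈ Finset.range (n+1), y i) - y j := by
          rw [← hsum, hsplit]; ring
        have e2 : (n : ℝ) * d - ((∑ i ∈ Finset.range (n+1), y i) - y j) + (d - y j)
            = ((n+1 : ℕ) : ℝ) * d - ∑ i ∈ Finset.range (n+1), y i := by
          push_cast; ring
        rw [e1, e2]
        exact h
end

section
/- Let ε > 0, let d ∈ ℝ, and let R ⊆ U_ε(d) be nonempty. If x_i ∈ A_{n_i}(ε, d, R) for 1 ≤ i ≤ k are such that |Σ_{i=1}^j (x_i − n_i·d)| < ε for every j ≤ k, then Σ_{i=1}^k x_i ∈ A_{n_1 + ⋯ + n_k}(ε, d, R). -/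
lemma rearrange (ε : ℝ) :
    ∀ (n : ℕ) (s : Multiset ℝ), s.card = n → (∀ a ∈ s, |a| < ε) →
    ∀ p : ℝ, |p| < ε → |p + s.sum| < ε →
    ∃ l : List ℝ, (l : Multiset ℝ) = s ∧ ∀ t, |p + (l.take t).sum| < ε := by
  intro n
  induction n with
  | zero =>
    intro s hcard _ p hp _
    rw [Multiset.card_eq_zero] at hcard
    subst hcard
    exact ⟨[], rfl, fun t => by simpa using hp⟩
  | succ n ih =>
    intro s hcard hstep p hp hend
    have hex : ∃ a ∈ s, |p + a| < ε := by
      have hne : s ≠ 0 := by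
        intro h; rw [h] at hcard; simp at hcard
      rcases le_or_gt 0 p with hp0 | hp0
      · by_cases hneg : ∃ a ∈ s, a ≤ 0
        · obtain ⟨a, haS, ha⟩ := hneg
          refine ⟨a, haS, ?_⟩
          have h1 := hstep a haS
          rw [abs_lt] at h1 hp ⊢
          constructor <;> nlinarith [h1.1, h1.2, hp.1, hp.2]
        · push_neg at hneg
          obtain ⟨a, haS⟩ := Multiset.exists_mem_of_ne_zero hne
          obtain ⟨s', rfl⟩ := Multiset.exists_cons_of_mem haS
          have hs' : (0:ℝ) ≤ s'.sum :=
            Multiset.sum_nonneg fun b hb => le_of_lt (hneg b (Multiset.mem_cons_of_mem hb))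
          refine ⟨a, haS, ?_⟩
          have hsum : (a ::ₘ s').sum = a + s'.sum := by simp
          rw [abs_lt] at hend ⊢
          rw [hsum] at hend
          have hapos : 0 < a := hneg a haS
          constructor <;> nlinarith [hend.1, hend.2]
      · by_cases hposs : ∃ a ∈ s, 0 ≤ a
        · obtain ⟨a, haS, ha⟩ := hposs
          refine ⟨a, haS, ?_⟩
          have h1 := hstep a haS
          rw [abs_lt] at h1 hp ⊢
          constructor <;> nlinarith [h1.1, h1.2, hp.1, hp.2]
        · push_neg at hposs
          obtain ⟨a, haS⟩ := Multiset.exists_mem_of_ne_zero hne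
          obtain ⟨s', rfl⟩ := Multiset.exists_cons_of_mem haS
          have hs' : s'.sum ≤ 0 := by
            have h0 : (0:ℝ) ≤ (s'.map (fun x => -x)).sum :=
              Multiset.sum_nonneg (by
                intro b hb
                obtain ⟨c, hc, rfl⟩ := Multiset.mem_map.mp hb
                have := hposs c (Multiset.mem_cons_of_mem hc)
                linarith)
            rw [Multiset.sum_map_neg'] at h0
            linarith
          refine ⟨a, haS, ?_⟩
          have hsum : (a ::ₘ s').sum = a + s'.sum := by simp
          rw [abs_lt] at hend ⊢
          rw [hsum] at hend
          have haneg : a < 0 := hposs a haS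
          constructor <;> nlinarith [hend.1, hend.2]
    obtain ⟨a, haS, hpa⟩ := hex
    obtain ⟨s', rfl⟩ := Multiset.exists_cons_of_mem haS
    have hcard' : s'.card = n := by
      rw [Multiset.card_cons] at hcard; omega
    have hstep' : ∀ b ∈ s', |b| < ε := fun b hb => hstep b (Multiset.mem_cons_of_mem hb)
    have hend' : |(p + a) + s'.sum| < ε := by
      have he : (p + a) + s'.sum = p + (a ::ₘ s').sum := by rw [Multiset.sum_cons]; ring
      rw [he]; exact hend
    obtain ⟨l', hl', hbound⟩ := ih s' hcard' hstep' (p + a) hpa hend'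
    refine ⟨a :: l', by rw [← hl']; rfl, ?_⟩
    intro t
    cases t with
    | zero => simpa using hp
    | succ t =>
      have hb := hbound t
      simp only [List.take_succ_cons, List.sum_cons, ← add_assoc]
      exact hb

lemma take_sum_eq (l : List ℝ) : ∀ t, t ≤ l.length →
    (l.take t).sum = ∑ i ∈ Finset.range t, l.getD i 0 := by
  induction l with
  | nil => intro t ht; simp at ht; subst ht; simp
  | cons a l ihl =>
    intro t ht
    cases t with
    | zero => simp
    | succ t =>
      rw [Finset.sum_range_succ']
      simp only [List.take_succ_cons, List.sum_cons, List.getD_cons_succ, List.getD_cons_zero]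
      rw [ihl t (by simpa using ht)]
      ring

lemma merge_blocks (ε d : ℝ) (hε : 0 < ε) (R : Set ℝ) (hR : R ⊆ USet ε d)
    (n₁ n₂ : ℕ) (u v : ℝ) (hu : u ∈ ASet ε d R n₁) (hv : v ∈ ASet ε d R n₂)
    (hend : |u + v - ((n₁ : ℝ) + n₂) * d| < ε) :
    u + v ∈ ASet ε d R (n₁ + n₂) := by
  obtain ⟨huU, y, hyR, hyu, hypre⟩ := hu
  obtain ⟨hvU, w, hwR, hwv, hwpre⟩ := hv
  -- the multiset of steps of the second block
  set s : Multiset ℝ := (Multiset.range n₂).map (fun i => d - w i) with hs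
  have hcard : s.card = n₂ := by simp [hs]
  have hssum : s.sum = ∑ i ∈ Finset.range n₂, (d - w i) := by
    rw [hs, Finset.sum]
    rfl
  have hstep : ∀ a ∈ s, |a| < ε := by
    intro a ha
    obtain ⟨i, hi, rfl⟩ := Multiset.mem_map.mp ha
    rw [Multiset.mem_range] at hi
    have := hR (hwR i hi)
    simp only [USet, Set.mem_Ioo] at this
    rw [abs_lt]; constructor <;> linarith [this.1, this.2]
  have hp : |(n₁ : ℝ) * d - u| < ε := by
    have h0 := hypre n₁ le_rfl
    have he : ∑ i ∈ Finset.range n₁, ((fun _ => d) i - y i) = (n₁ : ℝ) * d - u := by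
      rw [hyu, Finset.sum_sub_distrib, Finset.sum_const, Finset.card_range, nsmul_eq_mul]
    rw [he] at h0; exact h0
  have hend2 : |((n₁ : ℝ) * d - u) + s.sum| < ε := by
    rw [hssum]
    have hsum2 : ∑ i ∈ Finset.range n₂, (d - w i) = (n₂ : ℝ) * d - v := by
      rw [Finset.sum_sub_distrib, ← hwv]; simp [mul_comm]
    rw [hsum2]
    have : ((n₁:ℝ) * d - u) + ((n₂:ℝ) * d - v) = -(u + v - ((n₁:ℝ) + n₂) * d) := by ring
    rw [this, abs_neg]; exact hend
  obtain ⟨l, hl, hbound⟩ := rearrange ε n₂ s hcard hstep _ hp hend2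
  have hllen : l.length = n₂ := by
    have h1 := congrArg Multiset.card hl
    rw [hcard] at h1
    simpa using h1
  -- elements of l are steps of the second block
  have hlmem : ∀ a ∈ l, ∃ i < n₂, a = d - w i := by
    intro a ha
    have : a ∈ s := by rw [← hl]; exact_mod_cast ha
    obtain ⟨i, hi, rfl⟩ := Multiset.mem_map.mp this
    exact ⟨i, Multiset.mem_range.mp hi, rfl⟩
  have hlsum : l.sum = s.sum := by rw [← hl]; rfl
  -- the combined witness
  set z : ℕ → ℝ := fun i => if i < n₁ then y i else d - l.getD (i - n₁) 0 with hz
  have hzsplit : ∀ t ≤ n₂, ∑ i ∈ Finset.range (n₁ + t), (d - z i)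
      = ((n₁ : ℝ) * d - u) + (l.take t).sum := by
    intro t ht
    rw [Finset.sum_range_add]
    have h1 : ∑ i ∈ Finset.range n₁, (d - z i) = (n₁ : ℝ) * d - u := by
      have hzy : ∀ i ∈ Finset.range n₁, d - z i = d - y i := by
        intro i hi
        rw [Finset.mem_range] at hi
        simp [hz, hi]
      rw [Finset.sum_congr rfl hzy, Finset.sum_sub_distrib, Finset.sum_const,
        Finset.card_range, nsmul_eq_mul, hyu]
    have h2 : ∑ i ∈ Finset.range t, (d - z (n₁ + i)) = (l.take t).sum := by
      rw [take_sum_eq l t (by omega)]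
      refine Finset.sum_congr rfl (fun i hi => ?_)
      simp [hz]
    rw [h1, h2]
  refine ⟨?_, z, ?_, ?_, ?_⟩
  · -- membership in USet
    simp only [USet, Set.mem_Ioo, Finset.sum_const, Finset.card_range, nsmul_eq_mul]
    rw [abs_lt] at hend
    push_cast
    constructor <;> linarith [hend.1, hend.2]
  · -- membership of witnesses in R
    intro i hi
    by_cases hi1 : i < n₁
    · simpa [hz, hi1] using hyR i hi1
    · have hi2 : i - n₁ < n₂ := by omega
      obtain ⟨j, hj, hjeq⟩ := hlmem (l.getD (i - n₁) 0) (by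
        rw [List.getD_eq_getElem l 0 (by omega)]
        exact List.getElem_mem _)
      have : z i = w j := by
        simp only [hz]
        rw [if_neg hi1, hjeq]
        ring
      rw [this]; exact hwR j hj
  · -- sum equals u + v
    have := hzsplit n₂ le_rfl
    rw [List.take_of_length_le (by omega), hlsum, hssum] at this
    have hsum2 : ∑ i ∈ Finset.range n₂, (d - w i) = (n₂ : ℝ) * d - v := by
      rw [Finset.sum_sub_distrib, ← hwv]; simp [mul_comm]
    rw [hsum2] at this
    have hconst : ∑ i ∈ Finset.range (n₁ + n₂), (d - z i)
        = ((n₁ + n₂ : ℕ) : ℝ) * d - ∑ i ∈ Finset.range (n₁ + n₂), z i := by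
      rw [Finset.sum_sub_distrib]; simp [mul_comm]
    rw [hconst] at this
    push_cast at this
    linarith [this]
  · -- prefix bounds
    intro r hr
    by_cases hr1 : r ≤ n₁
    · have : ∑ i ∈ Finset.range r, (d - z i) = ∑ i ∈ Finset.range r, (d - y i) := by
        refine Finset.sum_congr rfl (fun i hi => ?_)
        rw [Finset.mem_range] at hi
        simp [hz, show i < n₁ by omega]
      rw [this]; exact hypre r hr1
    · have ht : r = n₁ + (r - n₁) := by omega
      rw [ht, hzsplit (r - n₁) (by omega)]
      exact hbound (r - n₁)

/-- If `xᵢ ∈ A_{nᵢ}(ε, d, R)` for `1 ≤ i ≤ k` are such that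
`|Σ_{i ≤ j} (xᵢ − nᵢ·d)| < ε` for every `j ≤ k`, then `Σ xᵢ ∈ A_{n₁ + ⋯ + n_k}(ε, d, R)`. -/
theorem ASet_additivity (ε d : ℝ) (hε : 0 < ε) (R : Set ℝ) (hR : R ⊆ USet ε d)
    (hne : R.Nonempty) (k : ℕ) (m : ℕ → ℕ) (x : ℕ → ℝ)
    (hx : ∀ i < k, x i ∈ ASet ε d R (m i))
    (h : ∀ j ≤ k, |∑ i ∈ Finset.range j, (x i - (m i : ℝ) * d)| < ε) :
    (∑ i ∈ Finset.range k, x i) ∈ ASet ε d R (∑ i ∈ Finset.range k, m i) := by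
  induction k with
  | zero =>
    simp only [Finset.range_zero, Finset.sum_empty]
    refine ⟨?_, fun _ => 0, ?_, ?_, ?_⟩
    · simp only [USet, Set.mem_Ioo, Finset.range_zero, Finset.sum_empty]
      constructor <;> linarith
    · intro i hi
      simp at hi
    · simp
    · intro r hr
      interval_cases r
      simpa using hε
  | succ k ihk =>
    have hIH := ihk (fun i hi => hx i (by omega)) (fun j hj => h j (by omega))
    rw [Finset.sum_range_succ, Finset.sum_range_succ]
    refine merge_blocks ε d hε R hR _ _ _ _ hIH (hx k (by omega)) ?_
    have hk := h (k + 1) le_rfl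
    rw [Finset.sum_range_succ, Finset.sum_sub_distrib] at hk
    have heq : (∑ i ∈ Finset.range k, x i) + x k
        - ((↑(∑ i ∈ Finset.range k, m i) : ℝ) + ↑(m k)) * d
        = (∑ i ∈ Finset.range k, x i + x k) - (∑ i ∈ Finset.range k, (m i : ℝ) * d + (m k : ℝ) * d) := by
      push_cast [add_mul, Finset.sum_mul]
      ring
    rw [heq]
    have heq2 : (∑ i ∈ Finset.range k, x i + x k
        - (∑ i ∈ Finset.range k, (m i : ℝ) * d + (m k : ℝ) * d))
        = (∑ i ∈ Finset.range k, x i - ∑ i ∈ Finset.range k, (m i : ℝ) * d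
          + (x k - (m k : ℝ) * d)) := by ring
    rw [heq2]
    exact hk
end

section
/- Let ε > 0, let d ∈ ℝ, and let R ⊆ U_ε(d) be a set with d ∈ R. Then for all natural numbers m ≤ n one has A_m(ε, d, R) + (n − m)·d ⊆ A_n(ε, d, R). -/
/-- If `d ∈ R` and `m ≤ n`, then `A_m(ε, d, R) + (n − m)·d ⊆ A_n(ε, d, R)`. -/
theorem ASet_shift_subset (ε d : ℝ) (hε : 0 < ε) (R : Set ℝ) (hR : R ⊆ USet ε d)
    (hd : d ∈ R) (m n : ℕ) (hmn : m ≤ n) :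
    ∀ z ∈ ASet ε d R m, z + ((n - m : ℕ) : ℝ) * d ∈ ASet ε d R n := by
  rintro z ⟨hzU, x, hxR, hzx, hparts⟩
  have hsum : ∀ k : ℕ, (∑ _i ∈ Finset.range k, d) = k * d := by
    intro k; rw [Finset.sum_const, Finset.card_range, nsmul_eq_mul]
  refine ⟨?_, fun i => if i < m then x i else d, ?_, ?_, ?_⟩
  · simp only [USet, Set.mem_Ioo, hsum] at hzU ⊢
    have : (n : ℝ) * d = m * d + (n - m : ℕ) * d := by
      rw [← add_mul, ← Nat.cast_add, Nat.add_sub_cancel' hmn]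
    constructor <;> [linarith [hzU.1]; linarith [hzU.2]]
  · intro i _
    by_cases h : i < m <;> simp [h, hd, hxR i]
  · rw [← Finset.sum_range_add_sum_Ico _ hmn]
    have h1 : (∑ i ∈ Finset.range m, if i < m then x i else d) =
        ∑ i ∈ Finset.range m, x i := by
      apply Finset.sum_congr rfl; intro i hi
      simp [Finset.mem_range.mp hi]
    have h2 : (∑ i ∈ Finset.Ico m n, if i < m then x i else d) =
        ((n - m : ℕ) : ℝ) * d := by
      rw [Finset.sum_congr rfl (fun i hi => if_neg (not_lt.mpr (Finset.mem_Ico.mp hi).1)),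
        Finset.sum_const, Nat.card_Ico, nsmul_eq_mul]
    rw [h1, h2, hzx]
  · intro r hr
    by_cases h : r ≤ m
    · have heq : ∀ i ∈ Finset.range r, d - (if i < m then x i else d) = d - x i := by
        intro i hi
        have : i < m := lt_of_lt_of_le (Finset.mem_range.mp hi) h
        simp [this]
      simp only [Finset.sum_congr rfl heq]
      exact hparts r h
    · push_neg at h
      have hsplit : (∑ i ∈ Finset.range r, (d - if i < m then x i else d)) =
          ∑ i ∈ Finset.range m, (d - x i) := by
        rw [← Finset.sum_range_add_sum_Ico _ h.le]
        have h2 : (∑ i ∈ Finset.Ico m r, (d - if i < m then x i else d)) = 0 := by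
          apply Finset.sum_eq_zero; intro i hi
          rw [if_neg (not_lt.mpr (Finset.mem_Ico.mp hi).1), sub_self]
        rw [h2, add_zero]
        apply Finset.sum_congr rfl; intro i hi
        simp [Finset.mem_range.mp hi]
      rw [hsplit]
      exact hparts m le_rfl
end

section
/- Let ε > 0, let 0 < δ ≤ ε, let d ∈ ℝ, let R ⊆ U_ε(d) with d ∈ R, let m ≥ 1, and let x, y ∈ A_m(ε, d, R). Set a = x − m·d and b = y − m·d, and suppose a < 0 < b and δ > gcd(a, b). Then there exists N ∈ ℕ such that for all n ≥ N the set A_n(ε, d, R) is δ-dense in U_ε(n·d). -/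
lemma aset_zero {ε d : ℝ} (hε : 0 < ε) (R : Set ℝ) : (0:ℝ) ∈ ASet ε d R 0 := by
  refine ⟨?_, fun _ => d, ?_, ?_, ?_⟩
  · simp [USet]; exact hε
  · omega
  · simp
  · intro r hr
    interval_cases r
    simpa using hε

lemma aset_snoc {ε d : ℝ} {R : Set ℝ} {n : ℕ} {w t : ℝ}
    (hw : w ∈ ASet ε d R n) (ht : t ∈ R)
    (h : |((n+1 : ℕ) : ℝ) * d - (w + t)| < ε) :
    w + t ∈ ASet ε d R (n+1) := by
  obtain ⟨hU, xw, hxR, hws, hpart⟩ := hw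
  have habs := abs_lt.mp h
  push_cast at habs
  refine ⟨?_, fun i => if i = n then t else xw i, ?_, ?_, ?_⟩
  · simp only [USet, Finset.sum_const, Finset.card_range, nsmul_eq_mul, Set.mem_Ioo]
    push_cast
    constructor <;> linarith [habs.1, habs.2]
  · intro i hi
    by_cases hii : i = n
    · simpa [hii] using ht
    · simpa [hii] using hxR i (by omega)
  · rw [Finset.sum_range_succ]
    have : ∑ i ∈ Finset.range n, (if i = n then t else xw i) = ∑ i ∈ Finset.range n, xw i := by
      apply Finset.sum_congr rfl
      intro i hi
      simp only [Finset.mem_range] at hi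
      simp [Nat.ne_of_lt hi]
    rw [this, if_pos rfl, ← hws]
  · intro r hr
    rcases Nat.lt_or_ge r (n+1) with hrn | hrn
    · have hrn' : r ≤ n := by omega
      have : ∑ i ∈ Finset.range r, (d - (if i = n then t else xw i)) =
          ∑ i ∈ Finset.range r, (d - xw i) := by
        apply Finset.sum_congr rfl
        intro i hi
        simp only [Finset.mem_range] at hi
        have : i ≠ n := by omega
        simp [this]
      rw [this]
      exact hpart r hrn'
    · have hr1 : r = n + 1 := by omega
      subst hr1
      have hs : ∑ i ∈ Finset.range (n+1), (d - (if i = n then t else xw i)) =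
          ((n+1:ℕ):ℝ) * d - (w + t) := by
        rw [Finset.sum_sub_distrib, Finset.sum_const, Finset.card_range, Finset.sum_range_succ]
        have : ∑ i ∈ Finset.range n, (if i = n then t else xw i) = ∑ i ∈ Finset.range n, xw i := by
          apply Finset.sum_congr rfl
          intro i hi
          simp only [Finset.mem_range] at hi
          simp [Nat.ne_of_lt hi]
        rw [this, if_pos rfl, ← hws]
        push_cast
        ring
      rw [hs]
      exact h

lemma sum_map_nonpos (v : List ℝ) (f : ℝ → ℝ) (h : ∀ t ∈ v, f t ≤ 0) : (v.map f).sum ≤ 0 := by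
  induction v with
  | nil => simp
  | cons a l ih =>
    simp only [List.map_cons, List.sum_cons]
    have := h a (by simp)
    have := ih (fun t ht => h t (by simp [ht]))
    linarith

lemma sum_map_dev (d : ℝ) (v : List ℝ) : (v.map (fun t => d - t)).sum = (v.length : ℝ) * d - v.sum := by
  induction v with
  | nil => simp
  | cons a l ih => simp [ih]; ring

lemma sum_map_nonneg (v : List ℝ) (f : ℝ → ℝ) (h : ∀ t ∈ v, 0 ≤ f t) : 0 ≤ (v.map f).sum := by
  induction v with
  | nil => simp
  | cons a l ih =>
    simp only [List.map_cons, List.sum_cons]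
    have := h a (by simp)
    have := ih (fun t ht => h t (by simp [ht]))
    linarith

lemma list_mem_aset {ε d : ℝ} (hε : 0 < ε) {R : Set ℝ} :
    ∀ (n : ℕ) (v : List ℝ), v.length = n → (∀ t ∈ v, t ∈ R) →
    (∀ t ∈ v, |d - t| < ε) → |(n : ℝ) * d - v.sum| < ε →
    v.sum ∈ ASet ε d R n := by
  intro n
  induction n with
  | zero =>
    intro v hlen _ _ _
    have hv : v = [] := List.length_eq_zero_iff.mp hlen
    subst hv
    simpa using aset_zero hε R
  | succ n ih =>
    intro v hlen hRv hstep hsum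
    have habs := abs_lt.mp hsum
    -- pick an element t with suitable sign of (d - t)
    have hpick : ∃ t ∈ v, |(n:ℝ) * d - (v.sum - t)| < ε := by
      rcases lt_or_ge 0 (((n+1 : ℕ):ℝ) * d - v.sum) with hσ | hσ
      · have hex : ∃ t ∈ v, 0 < d - t := by
          by_contra hc
          push_neg at hc
          have hle := sum_map_nonpos v (fun t => d - t) hc
          rw [sum_map_dev, hlen] at hle
          push_cast at hσ hle
          linarith
        obtain ⟨t, htv, hte⟩ := hex
        have h2 := abs_lt.mp (hstep t htv)
        refine ⟨t, htv, abs_lt.mpr ?_⟩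
        push_cast at habs hσ ⊢
        constructor <;> linarith
      · have hex : ∃ t ∈ v, d - t ≤ 0 := by
          by_contra hc
          push_neg at hc
          obtain ⟨t0, l0, rfl⟩ := List.exists_cons_of_ne_nil
            (by intro hnil; rw [hnil] at hlen; simp at hlen : v ≠ [])
          have h1 : 0 < d - t0 := hc t0 (by simp)
          have h3 : (0:ℝ) ≤ ((l0.map (fun t => d - t)).sum) :=
            sum_map_nonneg l0 _ (fun s hs => le_of_lt (hc s (by simp [hs])))
          have h6 := sum_map_dev d (t0 :: l0)
          simp only [List.map_cons, List.sum_cons] at h6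
          rw [hlen] at h6
          push_cast at hσ h6
          simp only [List.sum_cons] at hσ
          linarith
        obtain ⟨t, htv, hte⟩ := hex
        have h2 := abs_lt.mp (hstep t htv)
        refine ⟨t, htv, abs_lt.mpr ?_⟩
        push_cast at habs hσ ⊢
        constructor <;> linarith
    obtain ⟨t, htv, hdev⟩ := hpick
    classical
    have hperm : v.Perm (t :: v.erase t) := List.perm_cons_erase htv
    have hsum' : v.sum = t + (v.erase t).sum := by
      have := hperm.sum_eq; simpa using this
    have hlen' : (v.erase t).length = n := by
      rw [List.length_erase_of_mem htv, hlen]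
      omega
    have hmem' : ∀ s ∈ v.erase t, s ∈ R := fun s hs => hRv s (List.mem_of_mem_erase hs)
    have hstep' : ∀ s ∈ v.erase t, |d - s| < ε := fun s hs => hstep s (List.mem_of_mem_erase hs)
    have hdev' : |(n : ℝ) * d - (v.erase t).sum| < ε := by
      have : (v.erase t).sum = v.sum - t := by linarith [hsum']
      rw [this]; exact hdev
    have hmem := ih (v.erase t) hlen' hmem' hstep' hdev'
    have heq : (v.erase t).sum + t = v.sum := by linarith [hsum']
    have hfin := aset_snoc hmem (hRv t htv) (by rw [heq]; exact hsum)
    rwa [heq] at hfin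

lemma aset_exists_list {ε d : ℝ} {R : Set ℝ} {m : ℕ} {x : ℝ} (hx : x ∈ ASet ε d R m) :
    ∃ L : List ℝ, L.length = m ∧ L.sum = x ∧ ∀ t ∈ L, t ∈ R := by
  obtain ⟨_, ξ, hξR, hxsum, _⟩ := hx
  refine ⟨List.ofFn (fun i : Fin m => ξ i), List.length_ofFn, ?_, ?_⟩
  · rw [List.sum_ofFn, Fin.sum_univ_eq_sum_range, hxsum]
  · intro t ht
    rw [List.mem_ofFn] at ht
    obtain ⟨i, rfl⟩ := ht
    exact hξR i i.isLt

lemma combo_mem_aset {ε d : ℝ} (hε : 0 < ε) {R : Set ℝ} (hR : R ⊆ USet ε d) (hd : d ∈ R)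
    {m : ℕ} {x y : ℝ} (hx : x ∈ ASet ε d R m) (hy : y ∈ ASet ε d R m)
    (p q k : ℕ) (h : |(p:ℝ) * (x - m*d) + (q:ℝ) * (y - m*d)| < ε) :
    (((p+q)*m + k : ℕ) : ℝ) * d + ((p:ℝ) * (x - m*d) + (q:ℝ) * (y - m*d))
      ∈ ASet ε d R ((p+q)*m + k) := by
  obtain ⟨Lx, hLxl, hLxs, hLxR⟩ := aset_exists_list hx
  obtain ⟨Ly, hLyl, hLys, hLyR⟩ := aset_exists_list hy
  set v : List ℝ := (List.replicate p Lx).flatten ++ (List.replicate q Ly).flatten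
      ++ List.replicate k d with hv
  have hlen : v.length = (p+q)*m + k := by
    simp [hv, List.length_flatten, List.map_replicate, List.sum_replicate, hLxl, hLyl]
    ring
  have hmemv : ∀ t ∈ v, t ∈ R := by
    intro t ht
    simp only [hv, List.mem_append, List.mem_flatten] at ht
    rcases ht with (⟨l, hl, htl⟩ | ⟨l, hl, htl⟩) | ht
    · exact hLxR t (by rwa [List.eq_of_mem_replicate hl] at htl)
    · exact hLyR t (by rwa [List.eq_of_mem_replicate hl] at htl)
    · rw [List.eq_of_mem_replicate ht]; exact hd
  have hstepv : ∀ t ∈ v, |d - t| < ε := by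
    intro t ht
    have := hR (hmemv t ht)
    simp only [USet, Set.mem_Ioo] at this
    rw [abs_lt]
    constructor <;> linarith [this.1, this.2]
  have hsumv : v.sum = (p:ℝ) * x + (q:ℝ) * y + (k:ℝ) * d := by
    simp [hv, List.sum_append, List.sum_flatten, List.map_replicate, List.sum_replicate,
      hLxs, hLys, nsmul_eq_mul]
    ring
  have hdev : |(((p+q)*m + k : ℕ) : ℝ) * d - v.sum| < ε := by
    rw [hsumv]
    have : (((p+q)*m + k : ℕ) : ℝ) * d - ((p:ℝ) * x + (q:ℝ) * y + (k:ℝ) * d)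
        = -((p:ℝ) * (x - m*d) + (q:ℝ) * (y - m*d)) := by
      push_cast
      ring
    rw [this, abs_neg]
    exact h
  have hfin := list_mem_aset hε _ v hlen hmemv hstepv hdev
  have : v.sum = (((p+q)*m + k : ℕ) : ℝ) * d + ((p:ℝ) * (x - m*d) + (q:ℝ) * (y - m*d)) := by
    rw [hsumv]; push_cast; ring
  rwa [this] at hfin

lemma exists_small_pos_gcd_pos {a b g δ : ℝ} (ha : a < 0) (hb : 0 < b)
    (hδ : 0 < δ) (hgδ : g < δ) (hg0 : 0 < g) (ka kb : ℤ)
    (hka : a = ka * g) (hkb : b = kb * g)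
    (hmax : ∀ c : ℝ, 0 < c → (∃ k : ℤ, a = k * c) → (∃ k : ℤ, b = k * c) → c ≤ g) :
    ∃ p q : ℕ, 0 < (p:ℝ) * a + (q:ℝ) * b ∧ (p:ℝ) * a + (q:ℝ) * b < δ := by
  have hka0 : ka < 0 := by
    by_contra hc
    push_neg at hc
    have : (0:ℝ) ≤ (ka:ℝ) := by exact_mod_cast hc
    nlinarith
  have hkb0 : 0 < kb := by
    by_contra hc
    push_neg at hc
    have : (kb:ℝ) ≤ 0 := by exact_mod_cast hc
    nlinarith
  have hcop : Int.gcd ka kb = 1 := by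
    set h := Int.gcd ka kb with hh
    have hpos : 0 < h := Int.gcd_pos_of_ne_zero_left kb (by omega)
    have hd1 : (h:ℤ) ∣ ka := Int.gcd_dvd_left ka kb
    have hd2 : (h:ℤ) ∣ kb := Int.gcd_dvd_right ka kb
    have hle := hmax ((h:ℝ) * g) (by positivity)
      ⟨ka / h, by
        rw [hka, ← mul_assoc]
        congr 1
        exact_mod_cast (Int.ediv_mul_cancel hd1).symm⟩
      ⟨kb / h, by
        rw [hkb, ← mul_assoc]
        congr 1
        exact_mod_cast (Int.ediv_mul_cancel hd2).symm⟩
    have h1 : (h:ℝ) ≤ 1 := by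
      by_contra hc
      push_neg at hc
      nlinarith
    have : h ≤ 1 := by exact_mod_cast h1
    omega
  set A := Int.gcdA ka kb with hA
  set B := Int.gcdB ka kb with hB
  have hbez : ka * A + kb * B = 1 := by
    have := Int.gcd_eq_gcd_ab ka kb
    rw [hcop] at this
    simpa using this.symm
  set t : ℤ := A.natAbs + B.natAbs with ht
  set P : ℤ := A + t * kb with hP
  set Q : ℤ := B - t * ka with hQ
  have htA : -A ≤ t := by
    have := Int.le_natAbs (a := -A)
    rw [Int.natAbs_neg] at this
    omega
  have htB : -B ≤ t := by
    have := Int.le_natAbs (a := -B)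
    rw [Int.natAbs_neg] at this
    omega
  have ht0 : 0 ≤ t := by positivity
  have hP0 : 0 ≤ P := by
    have h3 : t * 1 ≤ t * kb := mul_le_mul_of_nonneg_left hkb0 ht0
    rw [hP]
    linarith
  have hQ0 : 0 ≤ Q := by
    have h3 : t * 1 ≤ t * (-ka) := mul_le_mul_of_nonneg_left (by omega) ht0
    rw [hQ]
    linarith
  have hPQ : P * ka + Q * kb = 1 := by
    rw [hP, hQ]
    linear_combination hbez
  have hPQr : (P:ℝ) * ka + (Q:ℝ) * kb = 1 := by exact_mod_cast congrArg (Int.cast : ℤ → ℝ) hPQ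
  have hval : (P:ℝ) * a + (Q:ℝ) * b = g := by
    rw [hka, hkb]
    linear_combination g * hPQr
  refine ⟨P.toNat, Q.toNat, ?_, ?_⟩
  · have e1 : ((P.toNat : ℕ) : ℝ) = (P : ℝ) := by exact_mod_cast Int.toNat_of_nonneg hP0
    have e2 : ((Q.toNat : ℕ) : ℝ) = (Q : ℝ) := by exact_mod_cast Int.toNat_of_nonneg hQ0
    rw [e1, e2, hval]
    exact hg0
  · have e1 : ((P.toNat : ℕ) : ℝ) = (P : ℝ) := by exact_mod_cast Int.toNat_of_nonneg hP0
    have e2 : ((Q.toNat : ℕ) : ℝ) = (Q : ℝ) := by exact_mod_cast Int.toNat_of_nonneg hQ0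
    rw [e1, e2, hval]
    exact hgδ

lemma exists_small_pos_gcd_zero {a b δ : ℝ} (ha : a < 0) (hb : 0 < b) (hδ : 0 < δ)
    (hnone : ∀ c : ℝ, 0 < c → (∃ k : ℤ, a = k * c) → (∃ k : ℤ, b = k * c) → False) :
    ∃ p q : ℕ, 0 < (p:ℝ) * a + (q:ℝ) * b ∧ (p:ℝ) * a + (q:ℝ) * b < δ := by
  set u : ℝ := -a with hu
  have hu0 : 0 < u := by simp [hu]; linarith
  set δ₀ : ℝ := min δ u with hδ₀def
  have hδ₀ : 0 < δ₀ := lt_min hδ hu0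
  have hδ₀δ : δ₀ ≤ δ := min_le_left _ _
  have hδ₀u : δ₀ ≤ u := min_le_right _ _
  set K : ℕ := ⌈u / δ₀⌉₊ with hK
  have hK0 : 0 < K := Nat.ceil_pos.mpr (by positivity)
  set q : ℝ := u / K with hq
  have hq0 : 0 < q := by positivity
  have hqδ₀ : q ≤ δ₀ := by
    rw [hq, div_le_iff₀ (by positivity)]
    calc u = (u / δ₀) * δ₀ := by field_simp
    _ ≤ K * δ₀ := by
        apply mul_le_mul_of_nonneg_right (Nat.le_ceil _) (le_of_lt hδ₀)
    _ = δ₀ * K := by ring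
  set V : ℕ → ℝ := fun j => u * Int.fract ((j:ℝ) * b / u) with hV
  have hV0 : ∀ j, 0 ≤ V j := fun j => by
    have := Int.fract_nonneg ((j:ℝ) * b / u)
    positivity
  have hVu : ∀ j, V j < u := fun j => by
    have := Int.fract_lt_one ((j:ℝ) * b / u)
    calc V j < u * 1 := by
          apply mul_lt_mul_of_pos_left this hu0
    _ = u := mul_one u
  have hVrep : ∀ j : ℕ, V j = (j:ℝ) * b + (⌊(j:ℝ) * b / u⌋ : ℝ) * a := by
    intro j
    rw [hV]
    simp only [Int.fract]
    field_simp
    ring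
  -- pigeonhole
  set F : ℕ → ℕ := fun j => ⌊V j / q⌋₊ with hF
  have hFK : ∀ j, F j < K := by
    intro j
    have h1 : V j / q < K := by
      rw [div_lt_iff₀ hq0, hq]
      field_simp
      exact hVu j
    have h2 : (0:ℝ) ≤ V j / q := by
      have := hV0 j
      positivity
    exact (Nat.floor_lt h2).mpr h1
  -- pigeonhole
  obtain ⟨j1, hj1, j2, hj2, hne, hFeq⟩ :=
    Finset.exists_ne_map_eq_of_card_lt_of_maps_to
      (s := Finset.range (K+1)) (t := Finset.range K)
      (by simp) (fun j _ => Finset.mem_range.mpr (hFK j))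
  have hVq : ∀ i : ℕ, (F i : ℝ) * q ≤ V i ∧ V i < ((F i : ℝ) + 1) * q := by
    intro i
    have h0 : (0:ℝ) ≤ V i / q := by
      have := hV0 i
      positivity
    constructor
    · have h1 : (⌊V i / q⌋₊ : ℝ) ≤ V i / q := Nat.floor_le h0
      calc (F i : ℝ) * q = (⌊V i / q⌋₊ : ℝ) * q := rfl
      _ ≤ (V i / q) * q := mul_le_mul_of_nonneg_right h1 (le_of_lt hq0)
      _ = V i := div_mul_cancel₀ _ (ne_of_gt hq0)
    · have h2 : V i / q < (⌊V i / q⌋₊ : ℝ) + 1 := Nat.lt_floor_add_one _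
      calc V i = (V i / q) * q := (div_mul_cancel₀ _ (ne_of_gt hq0)).symm
      _ < ((⌊V i / q⌋₊ : ℝ) + 1) * q := mul_lt_mul_of_pos_right h2 hq0
      _ = ((F i : ℝ) + 1) * q := rfl
  clear_value V F u δ₀ K q
  have main : ∀ j j' : ℕ, j < j' → F j = F j' →
      ∃ p p' : ℕ, 0 < (p:ℝ) * a + (p':ℝ) * b ∧ (p:ℝ) * a + (p':ℝ) * b < δ := by
    intro j j' hjj hFeq'
    set w0 : ℝ := V j' - V j with hw0def
    have hbucket : |w0| < q := by
      obtain ⟨l1, l2⟩ := hVq j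
      obtain ⟨l3, l4⟩ := hVq j'
      rw [hFeq'] at l1 l2
      rw [abs_lt]
      constructor <;> [nlinarith; nlinarith]
    set Ia : ℤ := ⌊(j':ℝ) * b / u⌋ - ⌊(j:ℝ) * b / u⌋ with hIadef
    have hIa0 : 0 ≤ Ia := by
      rw [hIadef]
      have hjle : (j:ℝ) ≤ (j':ℝ) := by exact_mod_cast le_of_lt hjj
      have : ⌊(j:ℝ) * b / u⌋ ≤ ⌊(j':ℝ) * b / u⌋ := by
        apply Int.floor_mono
        gcongr
      omega
    have hcbR : ((j' - j : ℕ) : ℝ) = (j' : ℝ) - (j : ℝ) :=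
      Nat.cast_sub (le_of_lt hjj)
    have hrep : w0 = ((j' - j : ℕ) : ℝ) * b + (Ia : ℝ) * a := by
      rw [hw0def, hVrep j, hVrep j', hcbR, hIadef]
      push_cast
      ring
    clear_value w0
    have hw0ne : w0 ≠ 0 := by
      intro h0
      have hcbpos : (0:ℝ) < ((j' - j : ℕ) : ℝ) := by
        rw [hcbR]
        have : (j:ℝ) < (j':ℝ) := by exact_mod_cast hjj
        linarith
      refine hnone (u / ((j' - j : ℕ) : ℝ)) (by positivity) ⟨-((j' - j : ℕ) : ℤ), ?_⟩ ⟨Ia, ?_⟩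
      · have hcbne : ((j' - j : ℕ) : ℝ) ≠ 0 := ne_of_gt hcbpos
        have heq2 : ((-((j' - j : ℕ) : ℤ) : ℤ) : ℝ) * (u / ((j' - j : ℕ) : ℝ)) = -u := by
          push_cast
          field_simp
        rw [heq2, hu]
        ring
      · -- cb * b = Ia * u  (from h0 and hrep)
        have hcb_b : ((j' - j : ℕ) : ℝ) * b = (Ia : ℝ) * u := by
          have := hrep
          rw [h0] at this
          rw [hu]
          linarith [this]
        field_simp
        linarith [hcb_b]
    rcases lt_or_gt_of_ne hw0ne with hneg | hpos
    · -- w0 < 0 : use k * w0 + u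
      have hIa1 : 1 ≤ Ia := by
        by_contra hc
        push_neg at hc
        have hIa00 : Ia = 0 := by omega
        rw [hIa00] at hrep
        have hcbpos : (0:ℝ) < ((j' - j : ℕ) : ℝ) := by
          rw [hcbR]
          have : (j:ℝ) < (j':ℝ) := by exact_mod_cast hjj
          linarith
        simp at hrep
        nlinarith
      set W : ℝ := -w0 with hWdef
      clear_value W
      have hW0 : 0 < W := by rw [hWdef]; linarith
      have hWδ₀ : W < δ₀ := by
        have : W ≤ |w0| := by rw [hWdef]; exact neg_le_abs _
        linarith [hbucket, hqδ₀]
      set k : ℕ := ⌊(u - δ₀) / W⌋₊ + 1 with hkdef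
      have hk1' : 1 ≤ k := by rw [hkdef]; omega
      clear_value k
      have hk1 : u - δ₀ < (k : ℝ) * W := by
        have h2 : (u - δ₀) / W < (⌊(u - δ₀) / W⌋₊ : ℝ) + 1 := Nat.lt_floor_add_one _
        have : (u - δ₀) / W < (k : ℝ) := by
          rw [hkdef]
          push_cast
          linarith
        calc u - δ₀ = ((u - δ₀) / W) * W := (div_mul_cancel₀ _ (ne_of_gt hW0)).symm
        _ < (k:ℝ) * W := mul_lt_mul_of_pos_right this hW0
      have hk2 : (k : ℝ) * W < u := by
        have h0 : (0:ℝ) ≤ (u - δ₀) / W := by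
          have : δ₀ ≤ u := hδ₀u
          have : 0 ≤ u - δ₀ := by linarith
          positivity
        have h1 : (⌊(u - δ₀) / W⌋₊ : ℝ) ≤ (u - δ₀) / W := Nat.floor_le h0
        have h3 : (⌊(u - δ₀) / W⌋₊ : ℝ) * W ≤ u - δ₀ := by
          calc (⌊(u - δ₀) / W⌋₊ : ℝ) * W ≤ ((u - δ₀) / W) * W := mul_le_mul_of_nonneg_right h1 (le_of_lt hW0)
          _ = u - δ₀ := div_mul_cancel₀ _ (ne_of_gt hW0)
        have : (k:ℝ) * W = (⌊(u - δ₀) / W⌋₊ : ℝ) * W + W := by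
          rw [hkdef]
          push_cast
          ring
        rw [this]
        linarith
      have hton : ((Ia.toNat : ℕ) : ℝ) = (Ia : ℝ) := by
        exact_mod_cast Int.toNat_of_nonneg hIa0
      have hIatn : 1 ≤ Ia.toNat := by omega
      have h1le : 1 ≤ k * Ia.toNat := Nat.mul_pos hk1' hIatn
      have hc1 : ((k * Ia.toNat - 1 : ℕ) : ℝ) = (k:ℝ) * (Ia:ℝ) - 1 := by
        rw [Nat.cast_sub h1le, Nat.cast_mul, hton, Nat.cast_one]
      have hc2 : ((k * (j' - j) : ℕ) : ℝ) = (k:ℝ) * ((j' - j : ℕ):ℝ) := by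
        rw [Nat.cast_mul]
      have hval : ((k * Ia.toNat - 1 : ℕ) : ℝ) * a + ((k * (j' - j) : ℕ) : ℝ) * b
          = u - (k:ℝ) * W := by
        rw [hc1, hc2]
        have hWw : (k:ℝ) * W = -((k:ℝ) * w0) := by rw [hWdef]; ring
        rw [hWw, hrep, hu]
        ring
      exact ⟨k * Ia.toNat - 1, k * (j' - j),
        by rw [hval]; linarith,
        by rw [hval]; linarith [hδ₀δ, hk1]⟩
    · -- 0 < w0
      have hton : ((Ia.toNat : ℕ) : ℝ) = (Ia : ℝ) := by
        exact_mod_cast Int.toNat_of_nonneg hIa0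
      have hval : ((Ia.toNat : ℕ) : ℝ) * a + ((j' - j : ℕ) : ℝ) * b = w0 := by
        rw [hton, hrep]
        ring
      refine ⟨Ia.toNat, j' - j, by rw [hval]; exact hpos, ?_⟩
      rw [hval]
      have := le_abs_self w0
      linarith [hbucket, hqδ₀, hδ₀δ]
  rcases (Ne.lt_or_gt hne) with hlt | hlt
  · exact main j1 j2 hlt hFeq
  · exact main j2 j1 hlt hFeq.symm

lemma exists_bound_hit {a b δ ε : ℝ} (ha : a < 0) (hb : 0 < b) (hε : 0 < ε) (hδ : 0 < δ)
    (p0 q0 : ℕ) (hw0 : 0 < (p0:ℝ) * a + (q0:ℝ) * b) (hwδ : (p0:ℝ) * a + (q0:ℝ) * b < δ) :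
    ∃ B : ℕ, ∀ c : ℝ, -ε ≤ c → c + δ ≤ ε → ∃ p q : ℕ, p + q ≤ B ∧
      c < (p:ℝ) * a + (q:ℝ) * b ∧ (p:ℝ) * a + (q:ℝ) * b < c + δ := by
  set w : ℝ := (p0:ℝ) * a + (q0:ℝ) * b with hwdef
  clear_value w
  set u : ℝ := -a with hudef
  have hu0 : 0 < u := by rw [hudef]; linarith
  clear_value u
  set M : ℕ := ⌈ε / u⌉₊ with hMdef
  have hMu : ε ≤ (M:ℝ) * u := by
    calc ε = (ε / u) * u := (div_mul_cancel₀ _ (ne_of_gt hu0)).symm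
    _ ≤ (M:ℝ) * u := mul_le_mul_of_nonneg_right (Nat.le_ceil _) (le_of_lt hu0)
  clear_value M
  set Kb : ℕ := ⌈(ε + (M:ℝ) * u) / w⌉₊ + 1 with hKbdef
  refine ⟨Kb * (p0 + q0) + M, ?_⟩
  intro c hc1 hc2
  have hT0 : 0 ≤ c + (M:ℝ) * u := by linarith
  set k : ℕ := ⌊(c + (M:ℝ) * u) / w⌋₊ + 1 with hkdef
  have hk1 : c + (M:ℝ) * u < (k:ℝ) * w := by
    have h2 : (c + (M:ℝ) * u) / w < (⌊(c + (M:ℝ) * u) / w⌋₊ : ℝ) + 1 := Nat.lt_floor_add_one _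
    have h3 : (c + (M:ℝ) * u) / w < (k:ℝ) := by
      rw [hkdef]
      push_cast
      linarith
    calc c + (M:ℝ) * u = ((c + (M:ℝ) * u) / w) * w := (div_mul_cancel₀ _ (ne_of_gt hw0)).symm
    _ < (k:ℝ) * w := mul_lt_mul_of_pos_right h3 hw0
  have hk2 : (k:ℝ) * w ≤ c + (M:ℝ) * u + w := by
    have h1 : (⌊(c + (M:ℝ) * u) / w⌋₊ : ℝ) ≤ (c + (M:ℝ) * u) / w := Nat.floor_le (by positivity)
    have h4 : (⌊(c + (M:ℝ) * u) / w⌋₊ : ℝ) * w ≤ c + (M:ℝ) * u :=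
      calc (⌊(c + (M:ℝ) * u) / w⌋₊ : ℝ) * w ≤ ((c + (M:ℝ) * u) / w) * w :=
            mul_le_mul_of_nonneg_right h1 (le_of_lt hw0)
      _ = c + (M:ℝ) * u := div_mul_cancel₀ _ (ne_of_gt hw0)
    have h5 : (k:ℝ) * w = (⌊(c + (M:ℝ) * u) / w⌋₊ : ℝ) * w + w := by
      rw [hkdef]
      push_cast
      ring
    rw [h5]
    linarith
  have hkKb : k ≤ Kb := by
    have hmono : (c + (M:ℝ) * u) / w ≤ (ε + (M:ℝ) * u) / w := by
      gcongr
      linarith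
    have := Nat.floor_mono hmono
    have h6 := Nat.floor_le_ceil ((ε + (M:ℝ) * u) / w)
    rw [hkdef, hKbdef]
    omega
  refine ⟨k * p0 + M, k * q0, ?_, ?_, ?_⟩
  · have h7 : k * (p0 + q0) ≤ Kb * (p0 + q0) := Nat.mul_le_mul_right _ hkKb
    calc k * p0 + M + k * q0 = k * (p0 + q0) + M := by ring
    _ ≤ Kb * (p0 + q0) + M := by omega
  · have hval : ((k * p0 + M : ℕ):ℝ) * a + ((k * q0 : ℕ):ℝ) * b = (k:ℝ) * w - (M:ℝ) * u := by
      rw [hwdef, hudef]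
      push_cast
      ring
    rw [hval]
    linarith
  · have hval : ((k * p0 + M : ℕ):ℝ) * a + ((k * q0 : ℕ):ℝ) * b = (k:ℝ) * w - (M:ℝ) * u := by
      rw [hwdef, hudef]
      push_cast
      ring
    rw [hval]
    linarith

/-- Let `d ∈ R ⊆ U_ε(d)`, `m ≥ 1`, `x, y ∈ A_m(ε, d, R)`, `a = x − m·d`,
`b = y − m·d` with `a < 0 < b`, and suppose `δ > gcd(a, b)` where `0 < δ ≤ ε`.  Then there is
`N` such that for all `n ≥ N` the set `A_n(ε, d, R)` is `δ`-dense in `U_ε(n·d)`. -/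
theorem ASet_generating_small_gcd (ε δ d : ℝ) (hε : 0 < ε) (hδ : 0 < δ) (hδε : δ ≤ ε)
    (R : Set ℝ) (hR : R ⊆ USet ε d) (hd : d ∈ R) (m : ℕ) (hm : 1 ≤ m)
    (x y : ℝ) (hx : x ∈ ASet ε d R m) (hy : y ∈ ASet ε d R m)
    (ha : x - (m : ℝ) * d < 0) (hb : 0 < y - (m : ℝ) * d)
    (g : ℝ) (hg : IsRealGcd (x - (m : ℝ) * d) (y - (m : ℝ) * d) g) (hgδ : g < δ) :
    ∃ N : ℕ, ∀ n : ℕ, N ≤ n →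
      EpsDenseIn (ASet ε d R n) δ (USet ε ((n : ℝ) * d)) := by
  obtain ⟨p0, q0, hw0, hwδ⟩ : ∃ p q : ℕ,
      0 < (p:ℝ) * (x - (m:ℝ)*d) + (q:ℝ) * (y - (m:ℝ)*d) ∧
      (p:ℝ) * (x - (m:ℝ)*d) + (q:ℝ) * (y - (m:ℝ)*d) < δ := by
    rcases hg with ⟨hg0, ⟨ka, hka⟩, ⟨kb, hkb⟩, hmax⟩ | ⟨hg0, hnone⟩
    · exact exists_small_pos_gcd_pos ha hb hδ hgδ hg0 ka kb hka hkb hmax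
    · exact exists_small_pos_gcd_zero ha hb hδ hnone
  obtain ⟨B, hB⟩ := exists_bound_hit ha hb hε hδ p0 q0 hw0 hwδ
  refine ⟨B * m, ?_⟩
  intro n hn t hsub
  simp only [USet] at hsub
  have hts := (Set.Ioo_subset_Ioo_iff (by linarith : t < t + δ)).mp hsub
  obtain ⟨p, q, hpq, hs1, hs2⟩ := hB (t - (n:ℝ)*d) (by linarith [hts.1]) (by linarith [hts.2])
  have hle : (p + q) * m ≤ n := le_trans (Nat.mul_le_mul_right m hpq) hn
  have hnk : (p+q)*m + (n - (p+q)*m) = n := by omega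
  have hsε : |(p:ℝ) * (x - (m:ℝ)*d) + (q:ℝ) * (y - (m:ℝ)*d)| < ε := by
    rw [abs_lt]
    constructor <;> linarith
  have hz := combo_mem_aset hε hR hd hx hy p q (n - (p+q)*m) hsε
  rw [hnk] at hz
  refine ⟨(n:ℝ)*d + ((p:ℝ) * (x - (m:ℝ)*d) + (q:ℝ) * (y - (m:ℝ)*d)), ⟨?_, ?_⟩, hz⟩
  · linarith
  · linarith
end

section
/- Fix υ > 0 and a strictly monotone sequence (t_m)_{m∈ℕ} of reals converging to 0 with υ + t_0 > 0. For any ε > 0, any 0 < δ ≤ ε, any d ∈ ℝ, and any R ⊆ U_ε(d) such that d ∈ R and R is tamely ε-dense in U_ε(d), there exist N ∈ ℕ and M ∈ ℕ such that for every n ≥ N the set A_n(ε, d, R) contains a subset that is M-tamely δ-dense in U_ε(n·d). -/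
/-- `𝒯_m`: the additive semigroup generated by `{υ + t₀, …, υ + t_m}`. -/
def TGen (υ : ℝ) (t : ℕ → ℝ) (m : ℕ) : Set ℝ :=
  semigroupGen {x : ℝ | ∃ i ≤ m, x = υ + t i}

/-- `𝒯_m^* = υ + 𝒯_m`. -/
def TGenStar (υ : ℝ) (t : ℕ → ℝ) (m : ℕ) : Set ℝ :=
  (fun x => υ + x) '' TGen υ t m

/-- `R ⊆ U_ε(d)` is `r`-tamely `δ`-dense in `U_ε(d)`: there is a finite
`L ⊆ U_ε(d) ∩ 𝒯_r^*` which is `δ`-dense in `U_ε(d)` and such that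
`R = (L + {t_m : m ≥ r}) ∩ U_ε(d)`. -/
def RTamelyDense (υ : ℝ) (t : ℕ → ℝ) (r : ℕ) (δ ε d : ℝ) (R : Set ℝ) : Prop :=
  ∃ L : Set ℝ, L.Finite ∧ L ⊆ USet ε d ∩ TGenStar υ t r ∧
    EpsDenseIn L δ (USet ε d) ∧
    R = {z : ℝ | ∃ l ∈ L, ∃ m ≥ r, z = l + t m} ∩ USet ε d

/-- `R` is tamely `δ`-dense in `U_ε(d)` if it is `r`-tamely `δ`-dense for some `r`. -/
def TamelyDense (υ : ℝ) (t : ℕ → ℝ) (δ ε d : ℝ) (R : Set ℝ) : Prop :=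
  ∃ r : ℕ, RTamelyDense υ t r δ ε d R

lemma sum_take_map (w : ℝ → ℝ) (d₀ : ℝ) : ∀ (l : List ℝ) (k : ℕ), k ≤ l.length →
    ((l.take k).map w).sum = ∑ i ∈ Finset.range k, w (l.getD i d₀) := by
  intro l
  induction l with
  | nil => intro k hk; simp at hk; simp [hk]
  | cons a tl ih =>
    intro k hk
    cases k with
    | zero => simp
    | succ k =>
      simp only [List.take_succ_cons, List.map_cons, List.sum_cons]
      rw [Finset.sum_range_succ']
      simp only [List.getD_cons_succ, List.getD_cons_zero]
      rw [ih k (by simpa using hk)]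
      ring

lemma sum_map_sub (d : ℝ) : ∀ l : List ℝ, (l.map (fun x => d - x)).sum = l.length • d - l.sum := by
  intro l
  induction l with
  | nil => simp
  | cons a tl ih =>
    simp [ih, succ_nsmul]
    ring

lemma sum_map_addconst (c : ℝ) (t : ℕ → ℝ) : ∀ l : List ℕ,
    (l.map (fun m => c + t m)).sum = l.length • c + (l.map t).sum := by
  intro l
  induction l with
  | nil => simp
  | cons a tl ih =>
    simp [ih, succ_nsmul]
    ring

lemma neg_sum_of_all_neg : ∀ (l : List ℝ), l ≠ [] → (∀ x ∈ l, x < 0) → l.sum < 0 := by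
  intro l
  induction l with
  | nil => simp
  | cons a tl ih =>
    intro _ hall
    rcases eq_or_ne tl [] with h | h
    · simp [h, hall a (by simp)]
    · have := ih h (fun x hx => hall x (by simp [hx]))
      have ha := hall a (by simp)
      simp only [List.sum_cons]
      linarith

lemma pos_sum_of_all_pos : ∀ (l : List ℝ), l ≠ [] → (∀ x ∈ l, 0 < x) → 0 < l.sum := by
  intro l
  induction l with
  | nil => simp
  | cons a tl ih =>
    intro _ hall
    rcases eq_or_ne tl [] with h | h
    · simp [h, hall a (by simp)]
    · have := ih h (fun x hx => hall x (by simp [hx]))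
      have ha := hall a (by simp)
      simp only [List.sum_cons]
      linarith

lemma order_lemma {α : Type} [DecidableEq α] (w : α → ℝ) (ε : ℝ) (hε : 0 < ε) :
    ∀ (n : ℕ) (l : List α), l.length = n → (∀ a ∈ l, |w a| < ε) → |(l.map w).sum| < ε →
    ∃ l' : List α, l'.Perm l ∧ ∀ k, |((l'.take k).map w).sum| < ε := by
  intro n
  induction n with
  | zero =>
    intro l hl _ _
    rw [List.length_eq_zero_iff] at hl
    subst hl
    exact ⟨[], List.Perm.refl _, by simpa using hε⟩
  | succ n ih =>
    intro l hl hall hsum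
    have hne : l ≠ [] := by rintro rfl; simp at hl
    have hex : ∃ a ∈ l, |(l.map w).sum - w a| < ε := by
      rcases le_or_gt 0 ((l.map w).sum) with hS | hS
      · have : ∃ a ∈ l, 0 ≤ w a := by
          by_contra hc
          push_neg at hc
          have : ∀ x ∈ l.map w, x < 0 := by
            intro x hx
            rw [List.mem_map] at hx
            obtain ⟨a, ha, rfl⟩ := hx
            exact hc a ha
          have := neg_sum_of_all_neg (l.map w) (by simpa using hne) this
          linarith
        obtain ⟨a, ha, hwa⟩ := this
        refine ⟨a, ha, ?_⟩
        have h1 : |w a| < ε := hall a ha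
        rw [abs_lt] at hsum h1 ⊢
        constructor <;> linarith
      · have : ∃ a ∈ l, w a ≤ 0 := by
          by_contra hc
          push_neg at hc
          have : ∀ x ∈ l.map w, 0 < x := by
            intro x hx
            rw [List.mem_map] at hx
            obtain ⟨a, ha, rfl⟩ := hx
            exact hc a ha
          have := pos_sum_of_all_pos (l.map w) (by simpa using hne) this
          linarith
        obtain ⟨a, ha, hwa⟩ := this
        refine ⟨a, ha, ?_⟩
        have h1 : |w a| < ε := hall a ha
        rw [abs_lt] at hsum h1 ⊢
        constructor <;> linarith
    obtain ⟨a, ha, hS'⟩ := hex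
    set l₀ := l.erase a with hl₀
    have hperm : l.Perm (a :: l₀) := List.perm_cons_erase ha
    have hlen₀ : l₀.length = n := by
      have := hperm.length_eq
      simp at this
      omega
    have hsum₀ : ((l₀.map w).sum) = (l.map w).sum - w a := by
      have := (hperm.map w).sum_eq
      simp at this
      linarith
    have hall₀ : ∀ b ∈ l₀, |w b| < ε := fun b hb => hall b (hperm.mem_iff.mpr (by simp [hb]))
    obtain ⟨l₀', hp₀, hpre⟩ := ih l₀ hlen₀ hall₀ (by rw [hsum₀]; exact hS')
    refine ⟨l₀' ++ [a], ?_, ?_⟩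
    · exact (List.perm_append_singleton a l₀').trans ((hp₀.cons a).trans hperm.symm)
    · intro k
      rcases le_or_gt k l₀'.length with hk | hk
      · rw [List.take_append_of_le_length hk]
        exact hpre k
      · have hlen' : (l₀' ++ [a]).length = n + 1 := by simp [hp₀.length_eq, hlen₀]
        rw [List.take_of_length_le (by simp only [List.length_append, List.length_cons, List.length_nil]; omega : (l₀' ++ [a]).length ≤ k)]
        have h3 : (l₀' ++ [a]).Perm l := (List.perm_append_singleton a l₀').trans ((hp₀.cons a).trans hperm.symm)
        have hperm2 : ((l₀' ++ [a]).map w).sum = (l.map w).sum := (h3.map w).sum_eq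
        rw [hperm2]
        exact hsum

lemma tgen_add {υ : ℝ} {t : ℕ → ℝ} {M : ℕ} {x y : ℝ} (hx : x ∈ TGen υ t M)
    (hy : y ∈ TGen υ t M) : x + y ∈ TGen υ t M := by
  obtain ⟨l1, h1, h2, h3⟩ := hx
  obtain ⟨l2, g1, g2, g3⟩ := hy
  exact ⟨l1 ++ l2, by simp [h1], by
    intro s hs; rcases List.mem_append.mp hs with h | h
    exacts [h2 s h, g2 s h], by simp [h3, g3]⟩

lemma tgen_gen {υ : ℝ} {t : ℕ → ℝ} {M : ℕ} {i : ℕ} (hi : i ≤ M) :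
    υ + t i ∈ TGen υ t M := ⟨[υ + t i], by simp, by simp; exact ⟨i, hi, rfl⟩, by simp⟩

lemma tgen_mono {υ : ℝ} {t : ℕ → ℝ} {r M : ℕ} (h : r ≤ M) :
    TGen υ t r ⊆ TGen υ t M := by
  rintro x ⟨l, h1, h2, h3⟩
  exact ⟨l, h1, fun s hs => by obtain ⟨i, hi, rfl⟩ := h2 s hs; exact ⟨i, le_trans hi h, rfl⟩, h3⟩

lemma tgen_list_sum {υ : ℝ} {t : ℕ → ℝ} {M : ℕ} :
    ∀ l : List ℝ, l ≠ [] → (∀ x ∈ l, x ∈ TGen υ t M) → l.sum ∈ TGen υ t M := by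
  intro l
  induction l with
  | nil => simp
  | cons a tl ih =>
    intro _ hall
    rcases eq_or_ne tl [] with h | h
    · simpa [h] using hall a (by simp)
    · exact tgen_add (hall a (by simp)) (by
        exact ih h (fun x hx => hall x (by simp [hx])))

/-- discrete intermediate value theorem -/
lemma discrete_ivt (u : ℕ → ℝ) (γ : ℝ) (hγ : 0 ≤ γ) (P : ℕ) :
    ∀ M, P ≤ M → (∀ m, P ≤ m → m < M → |u (m+1) - u m| ≤ γ) →
    ∀ s, ((u P ≤ s ∧ s ≤ u M) ∨ (u M ≤ s ∧ s ≤ u P)) →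
    ∃ m, P ≤ m ∧ m ≤ M ∧ |u m - s| ≤ γ := by
  intro M
  induction M with
  | zero =>
    intro hPM _ s hs
    have hP0 : P = 0 := Nat.le_zero.mp hPM
    subst hP0
    have : s = u 0 := by rcases hs with ⟨h1, h2⟩ | ⟨h1, h2⟩ <;> linarith
    exact ⟨0, le_refl _, le_refl _, by simp [this, hγ]⟩
  | succ M ih =>
    intro hPM hgap s hs
    rcases eq_or_lt_of_le hPM with h | h
    · have : s = u (M+1) := by rw [h] at hs; rcases hs with ⟨h1, h2⟩ | ⟨h1, h2⟩ <;> linarith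
      refine ⟨M+1, by omega, le_refl _, by simp [this, hγ]⟩
    · have hPM' : P ≤ M := by omega
      by_cases hbet : (u P ≤ s ∧ s ≤ u M) ∨ (u M ≤ s ∧ s ≤ u P)
      · obtain ⟨m, hm1, hm2, hm3⟩ := ih hPM' (fun m a b => hgap m a (by omega)) s hbet
        exact ⟨m, hm1, by omega, hm3⟩
      · push_neg at hbet
        obtain ⟨hb1, hb2⟩ := hbet
        have hbound : |u (M+1) - u M| ≤ γ := hgap M hPM' (by omega)
        refine ⟨M+1, by omega, le_refl _, ?_⟩
        rw [abs_le] at hbound ⊢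
        rcases hs with ⟨h1, h2⟩ | ⟨h1, h2⟩
        · have h3 := hb1 h1
          constructor <;> linarith
        · have h4 : s < u M := by
            by_contra hc
            push_neg at hc
            exact absurd h2 (not_le.mpr (hb2 hc))
          constructor <;> linarith

lemma fine_sums (t : ℕ → ℝ) (P M : ℕ) (hPM : P ≤ M) (γ : ℝ) (hγ : 0 ≤ γ)
    (a₀ a₁ : ℝ) (ha₀ : a₀ = min (t P) (t M)) (ha₁ : a₁ = max (t P) (t M))
    (hchain : ∀ s, a₀ ≤ s → s ≤ a₁ → ∃ m, P ≤ m ∧ m ≤ M ∧ |t m - s| ≤ γ) :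
    ∀ (K : ℕ) (y : ℝ), (K : ℝ) * a₀ ≤ y → y ≤ (K : ℝ) * a₁ →
    ∃ lst : List ℕ, lst.length = K ∧ (∀ m ∈ lst, P ≤ m ∧ m ≤ M) ∧ |(lst.map t).sum - y| ≤ γ := by
  have ha01 : a₀ ≤ a₁ := by rw [ha₀, ha₁]; exact min_le_max
  obtain ⟨m0, hm0P, hm0M, hm0⟩ : ∃ m, P ≤ m ∧ m ≤ M ∧ t m = a₀ := by
    rcases le_total (t P) (t M) with h | h
    · exact ⟨P, le_refl _, hPM, by rw [ha₀, min_eq_left h]⟩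
    · exact ⟨M, hPM, le_refl _, by rw [ha₀, min_eq_right h]⟩
  obtain ⟨m1, hm1P, hm1M, hm1⟩ : ∃ m, P ≤ m ∧ m ≤ M ∧ t m = a₁ := by
    rcases le_total (t P) (t M) with h | h
    · exact ⟨M, hPM, le_refl _, by rw [ha₁, max_eq_right h]⟩
    · exact ⟨P, le_refl _, hPM, by rw [ha₁, max_eq_left h]⟩
  intro K
  induction K with
  | zero =>
    intro y hy1 hy2
    have : y = 0 := by push_cast at hy1 hy2; linarith
    exact ⟨[], rfl, by simp, by simp [this, hγ]⟩
  | succ K ih =>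
    intro y hy1 hy2
    rcases le_or_gt y ((K : ℝ) * a₁ + a₀) with hc | hc
    · obtain ⟨lst, hlen, hmem, herr⟩ := ih (y - a₀) (by push_cast at hy1 ⊢; linarith)
        (by linarith)
      refine ⟨m0 :: lst, by simp [hlen], ?_, ?_⟩
      · intro m hm
        rcases List.mem_cons.mp hm with h | h
        · exact h ▸ ⟨hm0P, hm0M⟩
        · exact hmem m h
      · simp only [List.map_cons, List.sum_cons, hm0]
        have : a₀ + (lst.map t).sum - y = (lst.map t).sum - (y - a₀) := by ring
        rw [this]
        exact herr
    · set s := y - (K : ℝ) * a₁ with hs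
      obtain ⟨m, hmP, hmM, hm⟩ := hchain s (by linarith) (by push_cast at hy2; linarith)
      refine ⟨m :: List.replicate K m1, by simp, ?_, ?_⟩
      · intro m' hm'
        rcases List.mem_cons.mp hm' with h | h
        · exact h ▸ ⟨hmP, hmM⟩
        · rw [List.eq_of_mem_replicate h]; exact ⟨hm1P, hm1M⟩
      · simp only [List.map_cons, List.sum_cons, List.map_replicate, hm1, List.sum_replicate,
          nsmul_eq_mul]
        have : t m + (K : ℝ) * a₁ - y = t m - s := by rw [hs]; ring
        rw [this]
        exact hm

lemma prog_select (g : ℕ → ℝ) (K : ℕ) (Δ lo hi : ℝ) (hstep : ∀ a, a < K → g (a+1) = g a + Δ)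
    (hΔpos : 0 < Δ) (hΔ : Δ ≤ hi - lo) (h0 : g 0 ≤ lo) (hK : lo ≤ g K) :
    ∃ a, a ≤ K ∧ lo ≤ g a ∧ g a ≤ hi := by
  classical
  have hex : ∃ a, lo ≤ g a := ⟨K, hK⟩
  set a₀ := Nat.find hex with ha₀
  have hspec : lo ≤ g a₀ := Nat.find_spec hex
  have haK : a₀ ≤ K := Nat.find_min' hex hK
  rcases Nat.eq_zero_or_pos a₀ with h | h
  · refine ⟨a₀, haK, hspec, ?_⟩
    rw [h] at hspec ⊢
    have : g 0 = lo := le_antisymm h0 hspec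
    linarith
  · obtain ⟨b, hb⟩ : ∃ b, a₀ = b + 1 := ⟨a₀ - 1, by omega⟩
    have hbK : b < K := by omega
    have hblt : ¬ lo ≤ g b := Nat.find_min hex (by omega)
    push_neg at hblt
    refine ⟨a₀, haK, hspec, ?_⟩
    rw [hb, hstep b hbK]
    linarith

lemma sums_finite (t : ℕ → ℝ) (Mb : ℕ) : ∀ K : ℕ,
    {f : ℝ | ∃ lst : List ℕ, lst.length = K ∧ (∀ m ∈ lst, m ≤ Mb) ∧
      f = (lst.map t).sum}.Finite := by
  intro K
  induction K with
  | zero =>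
    apply Set.Finite.subset (Set.finite_singleton (0 : ℝ))
    rintro f ⟨lst, hlen, -, rfl⟩
    rw [List.length_eq_zero_iff] at hlen
    simp [hlen]
  | succ K ih =>
    apply Set.Finite.subset (Set.Finite.image2 (· + ·) ((Set.finite_Iic Mb).image t) ih)
    rintro f ⟨lst, hlen, hmem, rfl⟩
    cases lst with
    | nil => simp at hlen
    | cons m rest =>
      refine Set.mem_image2.mpr ⟨t m, ⟨m, by simpa using hmem m (by simp), rfl⟩,
        (rest.map t).sum, ⟨rest, by simpa using hlen, fun m' hm' => hmem m' (by simp [hm']), rfl⟩, by simp⟩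


set_option maxHeartbeats 2000000 in
/-- Fix `υ > 0` and a strictly monotone sequence `t_m → 0` with `υ + t₀ > 0`.
For any `ε > 0`, `0 < δ ≤ ε`, `d`, and `R ⊆ U_ε(d)` with `d ∈ R` and `R` tamely `ε`-dense in
`U_ε(d)`, there are `N, M ∈ ℕ` such that for every `n ≥ N` the set `A_n(ε, d, R)` contains a
subset which is `M`-tamely `δ`-dense in `U_ε(n·d)`. -/
theorem delta_density_constant (υ : ℝ) (hυ : 0 < υ) (t : ℕ → ℝ)
    (hmono : StrictMono t ∨ StrictAnti t)
    (hlim : Filter.Tendsto t Filter.atTop (nhds 0)) (ht0 : 0 < υ + t 0)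
    (ε δ d : ℝ) (hε : 0 < ε) (hδ : 0 < δ) (hδε : δ ≤ ε)
    (R : Set ℝ) (hR : R ⊆ USet ε d) (hd : d ∈ R)
    (htame : TamelyDense υ t ε ε d R) :
    ∃ N M : ℕ, ∀ n : ℕ, N ≤ n →
      ∃ R' : Set ℝ, R' ⊆ ASet ε d R n ∧
        RTamelyDense υ t M δ ε ((n : ℝ) * d) R' := by
  
  obtain ⟨r, L, hLfin, hLsub, hLdense, hReq⟩ := htame
  -- sign of t
  have hsign : (StrictAnti t ∧ ∀ m, 0 < t m) ∨ (StrictMono t ∧ ∀ m, t m < 0) := by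
    rcases hmono with hm | hm
    · refine Or.inr ⟨hm, fun m => ?_⟩
      have h1 : t (m+1) ≤ 0 :=
        ge_of_tendsto hlim (Filter.eventually_atTop.mpr ⟨m+1, fun k hk => hm.monotone hk⟩)
      exact lt_of_lt_of_le (hm (Nat.lt_succ_self m)) h1
    · refine Or.inl ⟨hm, fun m => ?_⟩
      have h1 : 0 ≤ t (m+1) :=
        le_of_tendsto hlim (Filter.eventually_atTop.mpr ⟨m+1, fun k hk => hm.antitone hk⟩)
      exact lt_of_le_of_lt h1 (hm (Nat.lt_succ_self m))
  have habs : ∀ m m', m ≤ m' → |t m'| ≤ |t m| := by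
    intro m m' hmm
    rcases hsign with ⟨hm, hp⟩ | ⟨hm, hp⟩
    · rw [abs_of_pos (hp m'), abs_of_pos (hp m)]
      exact hm.antitone hmm
    · rw [abs_of_neg (hp m'), abs_of_neg (hp m)]
      exact neg_le_neg (hm.monotone hmm)
  -- representation of d
  have hd' := hd
  rw [hReq] at hd'
  obtain ⟨⟨l₀, hl₀L, m₀, hm₀r, hdeq⟩, -⟩ := hd'
  -- coarse points above and below d
  obtain ⟨lp, hlpI, hlpL⟩ := hLdense d (by
    intro x hx
    simp only [USet, Set.mem_Ioo] at hx ⊢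
    constructor <;> linarith [hx.1, hx.2])
  obtain ⟨lm, hlmI, hlmL⟩ := hLdense (d - ε) (by
    intro x hx
    simp only [Set.mem_Ioo] at hx
    simp only [USet, Set.mem_Ioo]
    constructor <;> linarith [hx.1, hx.2])
  simp only [Set.mem_Ioo] at hlpI hlmI
  set νp := lp - d with hνp
  set νm := d - lm with hνm
  have hνp0 : 0 < νp := by simp [hνp]; linarith [hlpI.1]
  have hνpε : νp < ε := by simp [hνp]; linarith [hlpI.2]
  have hνm0 : 0 < νm := by simp [hνm]; linarith [hlmI.2]
  have hνmε : νm < ε := by simp [hνm]; linarith [hlmI.1]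
  clear_value νp νm
  -- smallness parameter
  set η := min (min νp νm) (min (min (ε - νp) (ε - νm)) δ) / 8 with hη
  have hη0 : 0 < η := by
    apply div_pos _ (by norm_num)
    simp only [lt_min_iff]
    refine ⟨⟨hνp0, hνm0⟩, ⟨by linarith, by linarith⟩, hδ⟩
  have hηνp : 8 * η ≤ νp := by
    rw [hη]; have := min_le_left (min νp νm) (min (min (ε - νp) (ε - νm)) δ)
    have := min_le_left νp νm; linarith [min_le_left (min νp νm) (min (min (ε - νp) (ε - νm)) δ), min_le_left νp νm]
  have hηνm : 8 * η ≤ νm := by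
    have h1 := min_le_left (min νp νm) (min (min (ε - νp) (ε - νm)) δ)
    have h2 := min_le_right νp νm
    rw [hη]; linarith
  have hηεp : 8 * η ≤ ε - νp := by
    have h1 := min_le_right (min νp νm) (min (min (ε - νp) (ε - νm)) δ)
    have h2 := min_le_left (min (ε - νp) (ε - νm)) δ
    have h3 := min_le_left (ε - νp) (ε - νm)
    rw [hη]; linarith
  have hηεm : 8 * η ≤ ε - νm := by
    have h1 := min_le_right (min νp νm) (min (min (ε - νp) (ε - νm)) δ)
    have h2 := min_le_left (min (ε - νp) (ε - νm)) δ
    have h3 := min_le_right (ε - νp) (ε - νm)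
    rw [hη]; linarith
  have hηδ : 8 * η ≤ δ := by
    have h1 := min_le_right (min νp νm) (min (min (ε - νp) (ε - νm)) δ)
    have h2 := min_le_right (min (ε - νp) (ε - νm)) δ
    rw [hη]; linarith
  clear_value η
  -- choose P
  obtain ⟨P₀, hP₀⟩ := Metric.tendsto_atTop.mp hlim η hη0
  set P := max P₀ (max r m₀) with hPdef
  have hP : ∀ m, P ≤ m → |t m| < η := by
    intro m hm
    have := hP₀ m (le_trans (le_max_left _ _) hm)
    rwa [Real.dist_eq, sub_zero] at this
  have hrP : r ≤ P := le_trans (le_max_left _ _) (le_max_right _ _)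
  have hm₀P : m₀ ≤ P := le_trans (le_max_right _ _) (le_max_right _ _)
  clear_value P
  have htP0 : t P ≠ 0 := by
    rcases hsign with ⟨-, hp⟩ | ⟨-, hp⟩
    exacts [ne_of_gt (hp P), ne_of_lt (hp P)]
  -- choose M
  obtain ⟨M₀, hM₀⟩ := Metric.tendsto_atTop.mp hlim (|t P| / 2)
    (by positivity)
  set M := max M₀ (P + 1) with hMdef
  have hPM : P ≤ M := le_trans (Nat.le_succ P) (le_max_right _ _)
  have htM : |t M| < |t P| / 2 := by
    have := hM₀ M (le_max_left _ _)
    rwa [Real.dist_eq, sub_zero] at this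
  clear_value M
  set W := |t P - t M| with hWdef
  have hW0 : |t P| / 2 < W := by
    have h1 : |t P| - |t M| ≤ W := by
      rw [hWdef]; exact le_trans (by linarith [abs_abs (t P)]) (abs_sub_abs_le_abs_sub (t P) (t M))
    linarith
  have hWpos : 0 < W := lt_of_le_of_lt (by positivity) hW0
  clear_value W
  -- choose K
  obtain ⟨K, hKge⟩ := exists_nat_ge ((4 * ε) / min (min νp νm) W)
  have hminpos : 0 < min (min νp νm) W := by
    simp only [lt_min_iff]; exact ⟨⟨hνp0, hνm0⟩, hWpos⟩
  have hK4 : 4 * ε ≤ (K : ℝ) * min (min νp νm) W := by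
    rw [div_le_iff₀ hminpos] at hKge
    linarith
  have hKνp : 4 * ε ≤ (K : ℝ) * νp := by
    have h1 : min (min νp νm) W ≤ νp := le_trans (min_le_left _ _) (min_le_left _ _)
    have h2 := mul_le_mul_of_nonneg_left h1 (Nat.cast_nonneg (α := ℝ) K)
    linarith
  have hKνm : 4 * ε ≤ (K : ℝ) * νm := by
    have h1 : min (min νp νm) W ≤ νm := le_trans (min_le_left _ _) (min_le_right _ _)
    have h2 := mul_le_mul_of_nonneg_left h1 (Nat.cast_nonneg (α := ℝ) K)
    linarith
  have hKW : 4 * ε ≤ (K : ℝ) * W := by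
    have h1 : min (min νp νm) W ≤ W := min_le_right _ _
    have h2 := mul_le_mul_of_nonneg_left h1 (Nat.cast_nonneg (α := ℝ) K)
    linarith
  have hK1 : 1 ≤ K := by
    rcases Nat.eq_zero_or_pos K with h | h
    · rw [h] at hK4
      norm_num at hK4
      linarith
    · exact h
  -- the TGen facts
  obtain ⟨σ₀, hσ₀, hl₀eq⟩ := (hLsub hl₀L).2
  obtain ⟨σp, hσp, hlpeq⟩ := (hLsub hlpL).2
  obtain ⟨σm, hσm, hlmeq⟩ := (hLsub hlmL).2
  have hdT : d ∈ TGen υ t M := by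
    have h1 : υ + t m₀ ∈ TGen υ t M := tgen_gen (le_trans hm₀P hPM)
    have h2 := tgen_add h1 (tgen_mono (le_trans hrP hPM) hσ₀)
    have : d = υ + t m₀ + σ₀ := by rw [hdeq, ← hl₀eq]; ring
    rwa [← this] at h2
  have hlpT : ∀ m, m ≤ M → lp + t m ∈ TGen υ t M := by
    intro m hm
    have h2 := tgen_add (tgen_gen hm) (tgen_mono (le_trans hrP hPM) hσp)
    have : lp + t m = υ + t m + σp := by rw [← hlpeq]; ring
    rwa [← this] at h2
  have hlmT : ∀ m, m ≤ M → lm + t m ∈ TGen υ t M := by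
    intro m hm
    have h2 := tgen_add (tgen_gen hm) (tgen_mono (le_trans hrP hPM) hσm)
    have : lm + t m = υ + t m + σm := by rw [← hlmeq]; ring
    rwa [← this] at h2
  -- membership of building blocks in R
  have hlpR : ∀ m, P ≤ m → lp + t m ∈ R := by
    intro m hm
    rw [hReq]
    refine ⟨⟨lp, hlpL, m, le_trans hrP hm, rfl⟩, ?_⟩
    have := hP m hm
    rw [abs_lt] at this
    simp only [USet, Set.mem_Ioo]
    constructor
    · have : lp = d + νp := by rw [hνp]; ring
      nlinarith [hP m hm]
    · have hlp : lp = d + νp := by rw [hνp]; ring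
      rw [hlp]
      linarith
  have hlmR : ∀ m, P ≤ m → lm + t m ∈ R := by
    intro m hm
    rw [hReq]
    refine ⟨⟨lm, hlmL, m, le_trans hrP hm, rfl⟩, ?_⟩
    have h1 := hP m hm
    rw [abs_lt] at h1
    have hlm : lm = d - νm := by rw [hνm]; ring
    simp only [USet, Set.mem_Ioo]
    rw [hlm]
    constructor <;> linarith
  -- Now the main construction
  refine ⟨K + 1, M, ?_⟩
  intro n hn
  have hnK : K + 1 ≤ n := hn
  have hcast1 : ((n - 1 - K : ℕ) : ℝ) = (n : ℝ) - 1 - K := by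
    have h1 : n - 1 - K = n - (K + 1) := by omega
    rw [h1, Nat.cast_sub hnK]
    push_cast
    ring
  set raw : Set ℝ := {v : ℝ | ∃ a : ℕ, a ≤ K ∧ ∃ lst : List ℕ, lst.length = K ∧
    (∀ m ∈ lst, P ≤ m ∧ m ≤ M) ∧
    v = (((n - 1 - K : ℕ) : ℝ) * d + (a : ℝ) * lp + (((K - a : ℕ) : ℝ) + 1) * lm) +
      (lst.map t).sum} with hrawdef
  set Ln := raw ∩ USet ε ((n : ℝ) * d) with hLndef
  refine ⟨{z : ℝ | ∃ l ∈ Ln, ∃ m ≥ M, z = l + t m} ∩ USet ε ((n : ℝ) * d), ?_, Ln, ?_, ?_, ?_, rfl⟩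
  · -- R' ⊆ ASet ε d R n
    rintro z ⟨⟨v, ⟨⟨a, ha, lst, hlen, hmemlst, hveq⟩, hvU⟩, m', hm'M, hzeq⟩, hzU⟩
    set E : List ℝ := ((lst.take a).map (fun m => lp + t m)) ++
      (((lst.drop a).map (fun m => lm + t m)) ++
        (List.replicate (n - 1 - K) d ++ [lm + t m'])) with hEdef
    have h1len : (lst.take a).length = a := by rw [List.length_take, hlen]; omega
    have h2len : (lst.drop a).length = K - a := by rw [List.length_drop, hlen]
    have hElen : E.length = n := by
      rw [hEdef]
      simp only [List.length_append, List.length_map, List.length_replicate,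
        List.length_cons, List.length_nil, h1len, h2len]
      omega
    have hEmem : ∀ x ∈ E, x ∈ R := by
      intro x hx
      rw [hEdef] at hx
      simp only [List.mem_append, List.mem_map, List.mem_replicate, List.mem_singleton] at hx
      rcases hx with ⟨m, hm, rfl⟩ | ⟨m, hm, rfl⟩ | ⟨-, rfl⟩ | rfl
      · exact hlpR m (hmemlst m (List.take_subset a lst hm)).1
      · exact hlmR m (hmemlst m (List.drop_subset a lst hm)).1
      · exact hd
      · exact hlmR m' (le_trans hPM hm'M)
    have hEsum : E.sum = z := by
      have h3 : ((lst.take a).map t).sum + ((lst.drop a).map t).sum = (lst.map t).sum := by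
        rw [← List.sum_append, ← List.map_append, List.take_append_drop]
      rw [hEdef, List.sum_append, List.sum_append, List.sum_append, sum_map_addconst,
        sum_map_addconst, List.sum_replicate, h1len, h2len, List.sum_cons, List.sum_nil,
        hzeq, hveq]
      simp only [nsmul_eq_mul]
      linarith only [h3]
    have hdevs : ∀ x ∈ E, |d - x| < ε := by
      intro x hx
      have h4 := hR (hEmem x hx)
      simp only [USet, Set.mem_Ioo] at h4
      rw [abs_lt]
      constructor <;> linarith only [h4.1, h4.2]
    have htot : |(E.map (fun x => d - x)).sum| < ε := by
      rw [sum_map_sub, hElen, hEsum]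
      simp only [USet, Set.mem_Ioo] at hzU
      rw [abs_lt, nsmul_eq_mul]
      constructor <;> linarith only [hzU.1, hzU.2]
    obtain ⟨E', hperm, hpre⟩ := order_lemma (fun x => d - x) ε hε n E hElen hdevs htot
    have hE'len : E'.length = n := hperm.length_eq.trans hElen
    refine ⟨?_, fun i => E'.getD i d, ?_, ?_, ?_⟩
    · rw [Finset.sum_const, Finset.card_range, nsmul_eq_mul]
      exact hzU
    · intro i hi
      have hilen : i < E'.length := by omega
      show E'.getD i d ∈ R
      rw [List.getD_eq_getElem E' d hilen]
      exact hEmem _ (hperm.subset (E'.getElem_mem hilen))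
    · have h5 := sum_take_map id d E' n (le_of_eq hE'len.symm)
      rw [List.take_of_length_le (le_of_eq hE'len)] at h5
      simp only [List.map_id, id_eq] at h5
      show z = ∑ i ∈ Finset.range n, E'.getD i d
      rw [← h5, hperm.sum_eq, hEsum]
    · intro r' hr'
      have h6 := sum_take_map (fun x => d - x) d E' r' (by omega)
      show |∑ i ∈ Finset.range r', (d - E'.getD i d)| < ε
      rw [← h6]
      exact hpre r'
  · -- Ln.Finite
    apply Set.Finite.subset (Set.Finite.image2 (· + ·)
      ((Set.finite_Iic K).image (fun a : ℕ =>
        ((n - 1 - K : ℕ) : ℝ) * d + (a : ℝ) * lp + (((K - a : ℕ) : ℝ) + 1) * lm))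
      (sums_finite t M K))
    rintro v ⟨⟨a, ha, lst, hlen, hmem, rfl⟩, -⟩
    exact Set.mem_image2.mpr ⟨_, ⟨a, ha, rfl⟩, _, ⟨lst, hlen, fun m hm => (hmem m hm).2, rfl⟩, rfl⟩
  · -- Ln ⊆ USet ∩ TGenStar
    rintro v ⟨⟨a, ha, lst, hlen, hmem, rfl⟩, hvU⟩
    refine ⟨hvU, ?_⟩
    set B : List ℝ := ((lst.take a).map (fun m => lp + t m)) ++
      (((lst.drop a).map (fun m => lm + t m)) ++ List.replicate (n - 1 - K) d) with hBdef
    have h1len : (lst.take a).length = a := by rw [List.length_take, hlen]; omega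
    have h2len : (lst.drop a).length = K - a := by rw [List.length_drop, hlen]
    have hBmem : ∀ x ∈ B, x ∈ TGen υ t M := by
      intro x hx
      rw [hBdef] at hx
      simp only [List.mem_append, List.mem_map, List.mem_replicate] at hx
      rcases hx with ⟨m, hm, rfl⟩ | ⟨m, hm, rfl⟩ | ⟨-, rfl⟩
      · exact hlpT m (hmem m (List.take_subset a lst hm)).2
      · exact hlmT m (hmem m (List.drop_subset a lst hm)).2
      · exact hdT
    have hBne : B ≠ [] := by
      intro hc
      have : B.length = 0 := by rw [hc]; rfl
      rw [hBdef] at this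
      simp only [List.length_append, List.length_map, List.length_replicate, h1len, h2len] at this
      omega
    have hBsum : B.sum = (a : ℝ) * lp + ((K - a : ℕ) : ℝ) * lm + ((n - 1 - K : ℕ) : ℝ) * d +
        (lst.map t).sum := by
      have h3 : ((lst.take a).map t).sum + ((lst.drop a).map t).sum = (lst.map t).sum := by
        rw [← List.sum_append, ← List.map_append, List.take_append_drop]
      rw [hBdef, List.sum_append, List.sum_append, sum_map_addconst, sum_map_addconst,
        List.sum_replicate, h1len, h2len]
      simp only [nsmul_eq_mul]
      linarith
    refine ⟨σm + B.sum, tgen_add (tgen_mono (le_trans hrP hPM) hσm)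
      (tgen_list_sum B hBne hBmem), ?_⟩
    show υ + (σm + B.sum) = _
    have h4 : lm = υ + σm := hlmeq.symm
    rw [hBsum]
    rw [h4]
    ring
  · -- density
    intro u husub
    have huI := (Set.Ioo_subset_Ioo_iff (by linarith only [hδ] : u < u + δ)).mp husub
    set y := u - (n : ℝ) * d with hydef
    clear_value y
    have hy1 : -ε ≤ y := by
      rw [hydef]; have h := huI.1; linarith only [h]
    have hy2 : y ≤ ε - δ := by
      rw [hydef]; have h := huI.2; linarith only [h]
    set a₀ := min (t P) (t M) with ha₀def
    set a₁ := max (t P) (t M) with ha₁def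
    clear_value a₀ a₁
    have hWa : a₁ - a₀ = W := by
      rcases le_total (t P) (t M) with h | h
      · rw [ha₁def, ha₀def, hWdef, max_eq_right h, min_eq_left h, abs_of_nonpos (by linarith)]
        ring
      · rw [ha₁def, ha₀def, hWdef, max_eq_left h, min_eq_right h, abs_of_nonneg (by linarith)]
    have htPb := abs_lt.mp (hP P le_rfl)
    have htMb := abs_lt.mp (hP M hPM)
    have ha₀l : -η < a₀ := by rw [ha₀def]; exact lt_min htPb.1 htMb.1
    have ha₀u : a₀ < η := by rw [ha₀def]; exact lt_of_le_of_lt (min_le_left _ _) htPb.2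
    have ha₁l : -η < a₁ := by rw [ha₁def]; exact lt_of_lt_of_le htPb.1 (le_max_left _ _)
    have ha₁u : a₁ < η := by rw [ha₁def]; exact max_lt htPb.2 htMb.2
    set g : ℕ → ℝ := fun a => (a : ℝ) * νp - ((K : ℝ) + 1 - a) * νm with hgdef
    have hstep : ∀ a, a < K → g (a + 1) = g a + (νp + νm) := by
      intro a _
      simp only [hgdef]
      push_cast
      ring
    have hKη : (K : ℝ) * (8 * η) ≤ (K : ℝ) * νm := 
      mul_le_mul_of_nonneg_left hηνm (Nat.cast_nonneg K)
    have hKη2 : (K : ℝ) * (8 * η) ≤ (K : ℝ) * νp := 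
      mul_le_mul_of_nonneg_left hηνp (Nat.cast_nonneg K)
    have hKa₁ : (K : ℝ) * a₁ ≤ (K : ℝ) * η := 
      mul_le_mul_of_nonneg_left (le_of_lt ha₁u) (Nat.cast_nonneg K)
    have hKa₁' : -((K : ℝ) * η) ≤ (K : ℝ) * a₁ := by
      have h := mul_le_mul_of_nonneg_left (le_of_lt ha₁l) (Nat.cast_nonneg (α := ℝ) K)
      rw [mul_neg] at h
      exact h
    have hKa₀ : (K : ℝ) * a₀ ≤ (K : ℝ) * η := 
      mul_le_mul_of_nonneg_left (le_of_lt ha₀u) (Nat.cast_nonneg K)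
    have hKa₀' : -((K : ℝ) * η) ≤ (K : ℝ) * a₀ := by
      have h := mul_le_mul_of_nonneg_left (le_of_lt ha₀l) (Nat.cast_nonneg (α := ℝ) K)
      rw [mul_neg] at h
      exact h
    have hKW' : (K : ℝ) * a₁ - (K : ℝ) * a₀ = (K : ℝ) * W := by rw [← hWa]; ring
    have hg0 : g 0 = -(((K : ℝ) + 1) * νm) := by simp [hgdef]
    have hgK : g K = (K : ℝ) * νp - νm := by simp [hgdef]
    clear_value g
    obtain ⟨a, haK, hga1, hga2⟩ := prog_select g K (νp + νm)
      (y + δ / 2 - (K : ℝ) * a₁) (y + δ / 2 - (K : ℝ) * a₀)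
      hstep (by linarith only [hνp0, hνm0])
      (by linarith only [hKW', hKW, hνpε, hνmε, hε])
      (by rw [hg0]; linarith only [hy1, hδ, hKa₁, hKη, hKνm, hνm0, hε])
      (by rw [hgK]; linarith only [hy2, hδ, hKa₁', hKη2, hKνp, hνmε, hε])
    set s := y + δ / 2 - g a with hsdef
    clear_value s
    have hs0 : (K : ℝ) * a₀ ≤ s := by rw [hsdef]; linarith only [hga2]
    have hs1 : s ≤ (K : ℝ) * a₁ := by rw [hsdef]; linarith only [hga1]
    have hchain : ∀ s', a₀ ≤ s' → s' ≤ a₁ → ∃ m, P ≤ m ∧ m ≤ M ∧ |t m - s'| ≤ δ / 4 := by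
      intro s' h1 h2
      apply discrete_ivt t (δ / 4) (by linarith only [hδ]) P M hPM
      · intro m hm1 hm2
        have e1 := hP m hm1
        have e2 := hP (m + 1) (by omega)
        calc |t (m + 1) - t m| ≤ |t (m + 1)| + |t m| := abs_sub _ _
          _ ≤ δ / 4 := by linarith only [e1, e2, hηδ]
      · rcases le_total (t P) (t M) with h | h
        · exact Or.inl ⟨by rwa [ha₀def, min_eq_left h] at h1, by rwa [ha₁def, max_eq_right h] at h2⟩
        · exact Or.inr ⟨by rwa [ha₀def, min_eq_right h] at h1, by rwa [ha₁def, max_eq_left h] at h2⟩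
    obtain ⟨lst, hlen, hmem, herr⟩ := fine_sums t P M hPM (δ / 4) (by linarith only [hδ]) a₀ a₁ ha₀def ha₁def
      hchain K s hs0 hs1
    set v := (((n - 1 - K : ℕ) : ℝ) * d + (a : ℝ) * lp + (((K - a : ℕ) : ℝ) + 1) * lm) +
      (lst.map t).sum with hvdef
    clear_value v
    have hoff : v - (n : ℝ) * d = g a + (lst.map t).sum := by
      rw [hvdef, hgdef, hcast1, Nat.cast_sub haK]
      have e1 : lp = d + νp := by rw [hνp]; ring
      have e2 : lm = d - νm := by rw [hνm]; ring
      rw [e1, e2]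
      push_cast
      ring
    have herr' := abs_le.mp herr
    have hvmem : v ∈ Set.Ioo u (u + δ) := by
      have h4 : v - u = g a + (lst.map t).sum - y := by rw [← hoff, hydef]; ring
      have h5 : g a + s = y + δ / 2 := by rw [hsdef]; ring
      obtain ⟨h6, h7⟩ := herr'
      rw [Set.mem_Ioo]
      constructor
      · linarith only [h4, h5, h6, h7, hδ]
      · linarith only [h4, h5, h6, h7, hδ]
    exact ⟨v, hvmem, ⟨a, haK, lst, hlen, hmem, hvdef⟩, husub hvmem⟩
end
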